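/- arXiv:1807.07067 — 2 statements merged into one kernel-verified Lean document; each statement's English description precedes it below -/
import Mathlib

section
/- Let N = (G, c) be a flow network and let g : Ein ∪ Eout → ℝ≥0 be an IO assignment such that for all A ⊆ Ein and B ⊆ Eout it holds that −maxFromTo_N(Ein \ A, B) ≤ g(A) − g(B) ≤ maxFromTo_N(A, Eout \ B). Then g extends to a feasible flow, i.e., there exists a feasible flow f : E → ℝ≥0 whose restriction to Ein ∪ Eout equals g. -/
set_option linter.unusedSectionVars false


open Finset

/-- A flow network: a finite vertex set `V`, a finite edge set `E` partitioned into
input edges `Ein`, output edges `Eout` and internal edges `Eint`; each internal edge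
has two distinct endpoints `tail e` and `head e` (with at most one internal edge per
`(tail, head)` pair), each input edge has a head only, each output edge a tail only
(values of `tail`/`head` outside their intended domains are irrelevant junk); and a
nonnegative upper-bound capacity `cap`. -/
structure FlowNetwork (V E : Type) [Fintype V] [Fintype E]
    [DecidableEq V] [DecidableEq E] where
  Ein : Finset E
  Eout : Finset E
  Eint : Finset E
  cover : Ein ∪ Eout ∪ Eint = Finset.univ
  disj_in_out : Disjoint Ein Eout
  disj_in_int : Disjoint Ein Eint
  disj_out_int : Disjoint Eout Eint
  tail : E → V
  head : E → V
  no_self_loop : ∀ e ∈ Eint, tail e ≠ head e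
  no_multi : ∀ e ∈ Eint, ∀ e' ∈ Eint, tail e = tail e' → head e = head e' → e = e'
  cap : E → ℝ
  cap_nonneg : ∀ e, 0 ≤ cap e

namespace FlowNetwork

variable {V E : Type} [Fintype V] [Fintype E] [DecidableEq V] [DecidableEq E]

/-- A flow `f : E → ℝ≥0` is feasible if it conserves flow at every vertex and
respects the capacity of every edge. -/
def Feasible (N : FlowNetwork V E) (f : E → ℝ) : Prop :=
  (∀ e, 0 ≤ f e) ∧ (∀ e, f e ≤ N.cap e) ∧
  ∀ v : V,
    ∑ e ∈ (N.Ein ∪ N.Eint).filter (fun e => N.head e = v), f e =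
    ∑ e ∈ (N.Eout ∪ N.Eint).filter (fun e => N.tail e = v), f e

/-- `maxFromTo N A B`: the supremum of `f(A)` over all feasible flows `f` that
vanish on `(Ein \ A) ∪ (Eout \ B)`. -/
noncomputable def maxFromTo (N : FlowNetwork V E) (A B : Finset E) : ℝ :=
  sSup {x : ℝ | ∃ f : E → ℝ, N.Feasible f ∧
    (∀ e ∈ (N.Ein \ A) ∪ (N.Eout \ B), f e = 0) ∧ x = ∑ e ∈ A, f e}


/-- excess (inflow minus outflow) at a vertex -/
def excess (N : FlowNetwork V E) (f : E → ℝ) (v : V) : ℝ :=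
  ∑ e ∈ (N.Ein ∪ N.Eint).filter (fun e => N.head e = v), f e -
  ∑ e ∈ (N.Eout ∪ N.Eint).filter (fun e => N.tail e = v), f e

lemma feasible_iff (N : FlowNetwork V E) (f : E → ℝ) :
    N.Feasible f ↔ (∀ e, 0 ≤ f e) ∧ (∀ e, f e ≤ N.cap e) ∧ ∀ v, N.excess f v = 0 := by
  unfold Feasible excess
  simp [sub_eq_zero]

lemma feasible_zero (N : FlowNetwork V E) : N.Feasible (fun _ => 0) := by
  refine ⟨fun e => le_refl 0, fun e => N.cap_nonneg e, fun v => by simp⟩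

/-- adding `δ` on a single edge changes the excess in the obvious way -/
lemma excess_add_single (N : FlowNetwork V E) (f : E → ℝ) (e0 : E) (δ : ℝ) (v : V) :
    N.excess (fun e => f e + if e = e0 then δ else 0) v =
      N.excess f v + (if e0 ∈ (N.Ein ∪ N.Eint).filter (fun e => N.head e = v) then δ else 0)
                   - (if e0 ∈ (N.Eout ∪ N.Eint).filter (fun e => N.tail e = v) then δ else 0) := by
  unfold excess
  rw [Finset.sum_add_distrib, Finset.sum_add_distrib, Finset.sum_ite_eq', Finset.sum_ite_eq']
  ring

lemma cut_sum {α : Type} [DecidableEq α] (s : Finset E) (ht : E → α) (T : Finset α) (f : E → ℝ) :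
    ∑ v ∈ T, ∑ e ∈ s.filter (fun e => ht e = v), f e
      = ∑ e ∈ s.filter (fun e => ht e ∈ T), f e := by
  rw [← Finset.sum_fiberwise_of_maps_to (g := ht)
      (fun e he => (Finset.mem_filter.mp he).2) f]
  refine Finset.sum_congr rfl (fun v hv => ?_)
  refine Finset.sum_congr ?_ (fun _ _ => rfl)
  ext e
  simp only [Finset.mem_filter]
  constructor
  · rintro ⟨h1, h3⟩
    exact ⟨⟨h1, by rw [h3]; exact hv⟩, h3⟩
  · rintro ⟨⟨h1, _⟩, h3⟩
    exact ⟨h1, h3⟩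

/-- global conservation: total inflow equals total outflow -/
lemma sum_Ein_eq_sum_Eout (N : FlowNetwork V E) (f : E → ℝ)
    (hcons : ∀ v, N.excess f v = 0) :
    ∑ e ∈ N.Ein, f e = ∑ e ∈ N.Eout, f e := by
  have h1 : ∑ v : V, N.excess f v = 0 := by simp [hcons]
  unfold excess at h1
  rw [Finset.sum_sub_distrib, cut_sum, cut_sum] at h1
  have ha : (N.Ein ∪ N.Eint).filter (fun e => N.head e ∈ Finset.univ) = N.Ein ∪ N.Eint := by
    simp
  have hb : (N.Eout ∪ N.Eint).filter (fun e => N.tail e ∈ Finset.univ) = N.Eout ∪ N.Eint := by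
    simp
  rw [ha, hb, Finset.sum_union N.disj_in_int, Finset.sum_union N.disj_out_int] at h1
  linarith


lemma cut_identity (N : FlowNetwork V E) (f : E → ℝ)
    (hcons : ∀ v, N.excess f v = 0) (T : Finset V) :
    ∑ e ∈ N.Ein.filter (fun e => N.head e ∈ T), f e
      + ∑ e ∈ N.Eint.filter (fun e => N.head e ∈ T ∧ N.tail e ∉ T), f e
    = ∑ e ∈ N.Eout.filter (fun e => N.tail e ∈ T), f e
      + ∑ e ∈ N.Eint.filter (fun e => N.tail e ∈ T ∧ N.head e ∉ T), f e := by
  have h1 : ∑ v ∈ T, N.excess f v = 0 := by simp [hcons]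
  unfold excess at h1
  rw [Finset.sum_sub_distrib, cut_sum, cut_sum, Finset.filter_union, Finset.filter_union,
    Finset.sum_union (Finset.disjoint_filter_filter N.disj_in_int),
    Finset.sum_union (Finset.disjoint_filter_filter N.disj_out_int)] at h1
  have h2 : ∑ e ∈ N.Eint.filter (fun e => N.head e ∈ T), f e
      = ∑ e ∈ N.Eint.filter (fun e => N.head e ∈ T ∧ N.tail e ∈ T), f e
        + ∑ e ∈ N.Eint.filter (fun e => N.head e ∈ T ∧ N.tail e ∉ T), f e := by
    rw [← Finset.sum_filter_add_sum_filter_not (N.Eint.filter (fun e => N.head e ∈ T))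
      (fun e => N.tail e ∈ T) f, Finset.filter_filter, Finset.filter_filter]
  have h3 : ∑ e ∈ N.Eint.filter (fun e => N.tail e ∈ T), f e
      = ∑ e ∈ N.Eint.filter (fun e => N.head e ∈ T ∧ N.tail e ∈ T), f e
        + ∑ e ∈ N.Eint.filter (fun e => N.tail e ∈ T ∧ N.head e ∉ T), f e := by
    rw [← Finset.sum_filter_add_sum_filter_not (N.Eint.filter (fun e => N.tail e ∈ T))
      (fun e => N.head e ∈ T) f, Finset.filter_filter, Finset.filter_filter]
    congr 1
    · exact Finset.sum_congr (Finset.filter_congr (fun e _ => and_comm)) (fun _ _ => rfl)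
  linarith

lemma maxSet_nonempty (N : FlowNetwork V E) (A B : Finset E) :
    (0:ℝ) ∈ {x : ℝ | ∃ f : E → ℝ, N.Feasible f ∧
      (∀ e ∈ (N.Ein \ A) ∪ (N.Eout \ B), f e = 0) ∧ x = ∑ e ∈ A, f e} :=
  ⟨fun _ => 0, N.feasible_zero, fun _ _ => rfl, by simp⟩

lemma maxSet_bdd (N : FlowNetwork V E) (A B : Finset E) :
    BddAbove {x : ℝ | ∃ f : E → ℝ, N.Feasible f ∧
      (∀ e ∈ (N.Ein \ A) ∪ (N.Eout \ B), f e = 0) ∧ x = ∑ e ∈ A, f e} := by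
  refine ⟨∑ e ∈ A, N.cap e, ?_⟩
  rintro x ⟨f, hf, hv, rfl⟩
  exact Finset.sum_le_sum fun e _ => hf.2.1 e

lemma le_maxFromTo (N : FlowNetwork V E) {A B : Finset E} {f : E → ℝ}
    (hf : N.Feasible f) (hv : ∀ e ∈ (N.Ein \ A) ∪ (N.Eout \ B), f e = 0) :
    ∑ e ∈ A, f e ≤ N.maxFromTo A B :=
  le_csSup (N.maxSet_bdd A B) ⟨f, hf, hv, rfl⟩

lemma maxFromTo_le (N : FlowNetwork V E) {A B : Finset E} {M : ℝ}
    (hM : ∀ f : E → ℝ, N.Feasible f → (∀ e ∈ (N.Ein \ A) ∪ (N.Eout \ B), f e = 0) →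
      ∑ e ∈ A, f e ≤ M) :
    N.maxFromTo A B ≤ M := by
  refine csSup_le ⟨0, N.maxSet_nonempty A B⟩ ?_
  rintro x ⟨f, hf, hv, rfl⟩
  exact hM f hf hv

lemma maxFromTo_nonneg (N : FlowNetwork V E) (A B : Finset E) :
    0 ≤ N.maxFromTo A B :=
  le_csSup (N.maxSet_bdd A B) (N.maxSet_nonempty A B)


/-- residual step: can push flow from `u` to `v` -/
def step (N : FlowNetwork V E) (f : E → ℝ) (u v : V) : Prop :=
  (∃ e ∈ N.Eint, N.tail e = u ∧ N.head e = v ∧ f e < N.cap e) ∨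
  (∃ e ∈ N.Eint, N.tail e = v ∧ N.head e = u ∧ 0 < f e)

/-- along a residual path one can push a small positive amount of flow -/
lemma augment (N : FlowNetwork V E) (f : E → ℝ)
    (h0 : ∀ e, 0 ≤ f e) (hc : ∀ e, f e ≤ N.cap e)
    {u v : V} (hr : Relation.ReflTransGen (N.step f) u v) :
    ∀ ε > (0:ℝ), ∃ δ : ℝ, ∃ f' : E → ℝ, 0 < δ ∧ δ ≤ ε ∧
      (∀ e, 0 ≤ f' e) ∧ (∀ e, f' e ≤ N.cap e) ∧
      (∀ e, e ∉ N.Eint → f' e = f e) ∧ (∀ e, |f' e - f e| ≤ ε) ∧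
      (∀ w, N.excess f' w =
        N.excess f w - (if w = u then δ else 0) + (if w = v then δ else 0)) := by
  induction hr using Relation.ReflTransGen.head_induction_on with
  | refl =>
      intro ε hε
      exact ⟨ε, f, hε, le_refl ε, h0, hc, fun _ _ => rfl, fun e => by simp [hε.le],
        fun w => by simp⟩
  | head hstep htail ih =>
      rename_i a c
      intro ε hε
      rcases hstep with ⟨e, he, hte, hhe, hlt⟩ | ⟨e, he, hte, hhe, hlt⟩
      · -- forward edge a → c with slack
        have hspos : (0:ℝ) < N.cap e - f e := by linarith
        obtain ⟨δ, f₁, hδpos, hδle, h0', hc', hio', hcl', hex'⟩ :=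
          ih (min (ε/2) ((N.cap e - f e)/2)) (by positivity)
        have hδε : δ ≤ ε/2 := hδle.trans (min_le_left _ _)
        have hδs : δ ≤ (N.cap e - f e)/2 := hδle.trans (min_le_right _ _)
        refine ⟨δ, fun x => f₁ x + if x = e then δ else 0, hδpos,
          by linarith, ?_, ?_, ?_, ?_, ?_⟩
        · intro x
          dsimp only
          by_cases hx : x = e
          · rw [if_pos hx]; have := h0' x; linarith
          · rw [if_neg hx]; simpa using h0' x
        · intro x
          dsimp only
          by_cases hx : x = e
          · rw [if_pos hx]; subst hx
            have h2 : f₁ x - f x ≤ min (ε/2) ((N.cap x - f x)/2) := (abs_le.mp (hcl' x)).2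
            have h4 := h2.trans (min_le_right _ _)
            linarith
          · rw [if_neg hx]; simpa using hc' x
        · intro x hx
          dsimp only
          have hxe : x ≠ e := fun hxe => hx (hxe ▸ he)
          rw [if_neg hxe, hio' x hx]; ring
        · intro x
          dsimp only
          by_cases hx : x = e
          · rw [if_pos hx]; subst hx
            have h2 := abs_le.mp (hcl' x)
            have h4 := h2.1
            have h5 := h2.2.trans (min_le_left _ _)
            have h6 : -(min (ε/2) ((N.cap x - f x)/2)) ≤ f₁ x - f x := h2.1
            have h7 : (0:ℝ) < min (ε/2) ((N.cap x - f x)/2) := by positivity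
            have h8 : min (ε/2) ((N.cap x - f x)/2) ≤ ε/2 := min_le_left _ _
            rw [abs_le]; constructor <;> [linarith; linarith]
          · rw [if_neg hx]
            have := hcl' x
            have h8 : min (ε/2) ((N.cap e - f e)/2) ≤ ε/2 := min_le_left _ _
            have h9 := (abs_le.mp this).1
            have h10 := (abs_le.mp this).2
            rw [abs_le]; constructor <;> simp <;> linarith
        · intro w
          rw [N.excess_add_single f₁ e δ w, hex' w]
          have hin : e ∈ N.Ein ∪ N.Eint := Finset.mem_union_right _ he
          have hout : e ∈ N.Eout ∪ N.Eint := Finset.mem_union_right _ he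
          have e1 : (e ∈ (N.Ein ∪ N.Eint).filter (fun e' => N.head e' = w)) ↔ (w = c) := by
            simp [Finset.mem_filter, hin, hhe, eq_comm]
          have e2 : (e ∈ (N.Eout ∪ N.Eint).filter (fun e' => N.tail e' = w)) ↔ (w = a) := by
            simp [Finset.mem_filter, hout, hte, eq_comm]
          rw [if_congr e1 rfl rfl, if_congr e2 rfl rfl]
          split_ifs <;> ring
      · -- backward edge (internal edge from c to a) with positive flow: decrease it
        obtain ⟨δ, f₁, hδpos, hδle, h0', hc', hio', hcl', hex'⟩ :=
          ih (min (ε/2) (f e/2)) (by positivity)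
        have hδε : δ ≤ ε/2 := hδle.trans (min_le_left _ _)
        have hδs : δ ≤ f e/2 := hδle.trans (min_le_right _ _)
        refine ⟨δ, fun x => f₁ x + if x = e then -δ else 0, hδpos,
          by linarith, ?_, ?_, ?_, ?_, ?_⟩
        · intro x
          dsimp only
          by_cases hx : x = e
          · rw [if_pos hx]; subst hx
            have h2 : -(min (ε/2) (f x/2)) ≤ f₁ x - f x := (abs_le.mp (hcl' x)).1
            have h4 : min (ε/2) (f x/2) ≤ f x/2 := min_le_right _ _
            linarith
          · rw [if_neg hx]; simpa using h0' x
        · intro x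
          dsimp only
          by_cases hx : x = e
          · rw [if_pos hx]; have := hc' x; linarith
          · rw [if_neg hx]; simpa using hc' x
        · intro x hx
          dsimp only
          have hxe : x ≠ e := fun hxe => hx (hxe ▸ he)
          rw [if_neg hxe, hio' x hx]; ring
        · intro x
          dsimp only
          by_cases hx : x = e
          · rw [if_pos hx]; subst hx
            have h2 := abs_le.mp (hcl' x)
            have h5 := h2.2.trans (min_le_left _ _)
            have h6 := h2.1
            have h7 : (0:ℝ) < min (ε/2) (f x/2) := by positivity
            have h8 : min (ε/2) (f x/2) ≤ ε/2 := min_le_left _ _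
            rw [abs_le]; constructor <;> [linarith; linarith]
          · rw [if_neg hx]
            have := hcl' x
            have h8 : min (ε/2) (f e/2) ≤ ε/2 := min_le_left _ _
            have h9 := (abs_le.mp this).1
            have h10 := (abs_le.mp this).2
            rw [abs_le]; constructor <;> simp <;> linarith
        · intro w
          rw [N.excess_add_single f₁ e (-δ) w, hex' w]
          have hin : e ∈ N.Ein ∪ N.Eint := Finset.mem_union_right _ he
          have hout : e ∈ N.Eout ∪ N.Eint := Finset.mem_union_right _ he
          have e1 : (e ∈ (N.Ein ∪ N.Eint).filter (fun e' => N.head e' = w)) ↔ (w = a) := by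
            simp [Finset.mem_filter, hin, hhe, eq_comm]
          have e2 : (e ∈ (N.Eout ∪ N.Eint).filter (fun e' => N.tail e' = w)) ↔ (w = c) := by
            simp [Finset.mem_filter, hout, hte, eq_comm]
          rw [if_congr e1 rfl rfl, if_congr e2 rfl rfl]
          split_ifs <;> ring


lemma not_mem_int_of_mem_io (N : FlowNetwork V E) {e : E} (he : e ∈ N.Ein ∪ N.Eout) :
    e ∉ N.Eint := by
  rcases Finset.mem_union.mp he with h | h
  · exact fun hc => (N.disj_in_int.forall_ne_finset h hc) rfl
  · exact fun hc => (N.disj_out_int.forall_ne_finset h hc) rfl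

lemma exists_better (N : FlowNetwork V E) (g : E → ℝ) (f : E → ℝ)
    (hf : N.Feasible f) (hfle : ∀ e ∈ N.Ein ∪ N.Eout, f e ≤ g e)
    {ein eout : E} (hein : ein ∈ N.Ein) (heout : eout ∈ N.Eout)
    (h1 : f ein < g ein) (h2 : f eout < g eout)
    (hcap1 : g ein ≤ N.cap ein) (hcap2 : g eout ≤ N.cap eout)
    (hreach : Relation.ReflTransGen (N.step f) (N.head ein) (N.tail eout)) :
    ∃ f' : E → ℝ, N.Feasible f' ∧ (∀ e ∈ N.Ein ∪ N.Eout, f' e ≤ g e) ∧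
      ∑ e ∈ N.Ein ∪ N.Eout, f e < ∑ e ∈ N.Ein ∪ N.Eout, f' e := by
  obtain ⟨hf0, hfc, hfcons⟩ := (N.feasible_iff f).mp hf
  have hε : (0:ℝ) < min (g ein - f ein) (g eout - f eout) := by
    apply lt_min <;> linarith
  obtain ⟨δ, f₁, hδpos, hδle, h0', hc', hio', _, hex'⟩ :=
    N.augment f hf0 hfc hreach _ hε
  have hδ1 : δ ≤ g ein - f ein := hδle.trans (min_le_left _ _)
  have hδ2 : δ ≤ g eout - f eout := hδle.trans (min_le_right _ _)
  have hinio : ein ∈ N.Ein ∪ N.Eout := Finset.mem_union_left _ hein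
  have houtio : eout ∈ N.Ein ∪ N.Eout := Finset.mem_union_right _ heout
  have hinint : ein ∉ N.Eint := N.not_mem_int_of_mem_io hinio
  have houtint : eout ∉ N.Eint := N.not_mem_int_of_mem_io houtio
  have hne : ein ≠ eout := fun hc => (N.disj_in_out.forall_ne_finset hein heout) hc
  have hf1in : f₁ ein = f ein := hio' ein hinint
  have hf1out : f₁ eout = f eout := hio' eout houtint
  set f₂ : E → ℝ := fun x => f₁ x + if x = ein then δ else 0 with hf₂
  set f₃ : E → ℝ := fun x => f₂ x + if x = eout then δ else 0 with hf₃
  have hf₃val : ∀ x, f₃ x = f₁ x + (if x = ein then δ else 0) + (if x = eout then δ else 0) := by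
    intro x; rfl
  have hioeq : ∀ x, x ≠ ein → x ≠ eout → f₃ x = f₁ x := by
    intro x hx1 hx2; rw [hf₃val, if_neg hx1, if_neg hx2]; ring
  refine ⟨f₃, (N.feasible_iff f₃).mpr ⟨?_, ?_, ?_⟩, ?_, ?_⟩
  · intro x
    rw [hf₃val]
    have := h0' x
    split_ifs <;> linarith
  · intro x
    rcases eq_or_ne x ein with hx | hx
    · subst hx; rw [hf₃val, if_pos rfl, if_neg hne, hf1in]; linarith
    rcases eq_or_ne x eout with hy | hy
    · subst hy; rw [hf₃val, if_neg hx, if_pos rfl, hf1out]; linarith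
    · rw [hioeq x hx hy]; exact hc' x
  · intro w
    have step1 : N.excess f₂ w = N.excess f₁ w + (if N.head ein = w then δ else 0) := by
      rw [hf₂, N.excess_add_single f₁ ein δ w]
      have c1 : (ein ∈ (N.Ein ∪ N.Eint).filter (fun e' => N.head e' = w)) ↔ (N.head ein = w) := by
        simp [Finset.mem_filter, Finset.mem_union, hein]
      have c2 : (ein ∈ (N.Eout ∪ N.Eint).filter (fun e' => N.tail e' = w)) ↔ False := by
        simp only [Finset.mem_filter, Finset.mem_union, iff_false]
        rintro ⟨h | h, -⟩
        · exact (N.disj_in_out.forall_ne_finset hein h) rfl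
        · exact hinint h
      rw [if_congr c1 rfl rfl, if_congr c2 rfl rfl, if_neg id]
      ring
    have step2 : N.excess f₃ w = N.excess f₂ w - (if N.tail eout = w then δ else 0) := by
      rw [hf₃, N.excess_add_single f₂ eout δ w]
      have c1 : (eout ∈ (N.Ein ∪ N.Eint).filter (fun e' => N.head e' = w)) ↔ False := by
        simp only [Finset.mem_filter, Finset.mem_union, iff_false]
        rintro ⟨h | h, -⟩
        · exact (N.disj_in_out.forall_ne_finset h heout) rfl
        · exact houtint h
      have c2 : (eout ∈ (N.Eout ∪ N.Eint).filter (fun e' => N.tail e' = w)) ↔ (N.tail eout = w) := by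
        simp [Finset.mem_filter, Finset.mem_union, heout]
      rw [if_congr c1 rfl rfl, if_congr c2 rfl rfl, if_neg id]
      ring
    rw [step2, step1, hex' w, hfcons w]
    have ec1 : (w = N.head ein) ↔ (N.head ein = w) := eq_comm
    have ec2 : (w = N.tail eout) ↔ (N.tail eout = w) := eq_comm
    simp only [ec1, ec2]
    split_ifs <;> ring
  · intro e he
    rcases eq_or_ne e ein with hx | hx
    · subst hx; rw [hf₃val, if_pos rfl, if_neg hne, hf1in]; linarith
    rcases eq_or_ne e eout with hy | hy
    · subst hy; rw [hf₃val, if_neg hx, if_pos rfl, hf1out]; linarith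
    · rw [hioeq e hx hy, hio' e (N.not_mem_int_of_mem_io he)]
      exact hfle e he
  · have hsum : ∑ e ∈ N.Ein ∪ N.Eout, f₃ e
        = ∑ e ∈ N.Ein ∪ N.Eout, f₁ e + δ + δ := by
      calc ∑ e ∈ N.Ein ∪ N.Eout, f₃ e
          = ∑ e ∈ N.Ein ∪ N.Eout, (f₁ e + (if e = ein then δ else 0) + (if e = eout then δ else 0)) :=
            Finset.sum_congr rfl (fun e _ => hf₃val e)
        _ = ∑ e ∈ N.Ein ∪ N.Eout, f₁ e + (if ein ∈ N.Ein ∪ N.Eout then δ else 0)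
              + (if eout ∈ N.Ein ∪ N.Eout then δ else 0) := by
            rw [Finset.sum_add_distrib, Finset.sum_add_distrib,
              Finset.sum_ite_eq', Finset.sum_ite_eq']
        _ = ∑ e ∈ N.Ein ∪ N.Eout, f₁ e + δ + δ := by
            rw [if_pos hinio, if_pos houtio]
    have hf1sum : ∑ e ∈ N.Ein ∪ N.Eout, f₁ e = ∑ e ∈ N.Ein ∪ N.Eout, f e :=
      Finset.sum_congr rfl (fun e he => hio' e (N.not_mem_int_of_mem_io he))
    rw [hsum, hf1sum]
    linarith


/-- an IO assignment `g` (nonnegative on `Ein ∪ Eout`, modelled as a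
total function whose other values are irrelevant) satisfying
`-maxFromTo N (Ein \ A) B ≤ g(A) - g(B) ≤ maxFromTo N A (Eout \ B)` for all
`A ⊆ Ein`, `B ⊆ Eout` extends to a feasible flow. -/
theorem stmt8 (N : FlowNetwork V E) (g : E → ℝ)
    (hg : ∀ e ∈ N.Ein ∪ N.Eout, 0 ≤ g e)
    (h : ∀ A ⊆ N.Ein, ∀ B ⊆ N.Eout,
      -(N.maxFromTo (N.Ein \ A) B) ≤ ∑ e ∈ A, g e - ∑ e ∈ B, g e ∧
      ∑ e ∈ A, g e - ∑ e ∈ B, g e ≤ N.maxFromTo A (N.Eout \ B)) :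
    ∃ f : E → ℝ, N.Feasible f ∧ ∀ e ∈ N.Ein ∪ N.Eout, f e = g e := by
  classical
  -- capacity bounds on g
  have hgcap_in : ∀ e ∈ N.Ein, g e ≤ N.cap e := by
    intro e he
    have h2 := (h {e} (Finset.singleton_subset_iff.mpr he) ∅ (Finset.empty_subset _)).2
    simp only [Finset.sum_singleton, Finset.sum_empty, sub_zero] at h2
    refine h2.trans (N.maxFromTo_le ?_)
    intro f hf _
    simpa using hf.2.1 e
  have hgcap_out : ∀ e ∈ N.Eout, g e ≤ N.cap e := by
    intro e he
    have h2 := (h ∅ (Finset.empty_subset _) {e} (Finset.singleton_subset_iff.mpr he)).1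
    simp only [Finset.sum_singleton, Finset.sum_empty, zero_sub, neg_le_neg_iff,
      Finset.sdiff_empty] at h2
    have h2' : g e ≤ N.maxFromTo N.Ein {e} := by
      have := neg_le_neg h2
      simpa using h2
    refine h2'.trans (N.maxFromTo_le ?_)
    intro f hf hv
    obtain ⟨hf0, hfc, hfcons⟩ := (N.feasible_iff f).mp hf
    have hglob := N.sum_Ein_eq_sum_Eout f hfcons
    have hsplit : ∑ e' ∈ N.Eout \ {e}, f e' + ∑ e' ∈ ({e} : Finset E), f e' = ∑ e' ∈ N.Eout, f e' :=
      Finset.sum_sdiff (Finset.singleton_subset_iff.mpr he)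
    have hzero : ∑ e' ∈ N.Eout \ {e}, f e' = 0 :=
      Finset.sum_eq_zero fun e' he' => hv e' (Finset.mem_union_right _ he')
    have : ∑ e' ∈ N.Ein, f e' = f e := by
      rw [hglob, ← hsplit, hzero, Finset.sum_singleton, zero_add]
    rw [this]
    exact hfc e
  -- the compact set of candidate flows
  set S : Set (E → ℝ) := {f | N.Feasible f ∧ ∀ e ∈ N.Ein ∪ N.Eout, f e ≤ g e} with hS
  have hSclosed : IsClosed S := by
    have hrw : S = (⋂ (e : E), {f : E → ℝ | 0 ≤ f e}) ∩
        ((⋂ (e : E), {f : E → ℝ | f e ≤ N.cap e}) ∩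
         ((⋂ (v : V), {f : E → ℝ | N.excess f v = 0}) ∩
          (⋂ (e : E), {f : E → ℝ | e ∈ N.Ein ∪ N.Eout → f e ≤ g e}))) := by
      ext f
      simp only [Set.mem_inter_iff, Set.mem_iInter, Set.mem_setOf_eq, hS,
        N.feasible_iff f]
      tauto
    rw [hrw]
    have hcont : ∀ v : V, Continuous (fun f : E → ℝ => N.excess f v) := by
      intro v
      unfold excess
      exact ((continuous_finset_sum _ fun e _ => continuous_apply e).sub
        (continuous_finset_sum _ fun e _ => continuous_apply e))
    refine IsClosed.inter (isClosed_iInter fun e => isClosed_le continuous_const (continuous_apply e))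
      (IsClosed.inter (isClosed_iInter fun e => isClosed_le (continuous_apply e) continuous_const)
        (IsClosed.inter (isClosed_iInter fun v => (isClosed_singleton (x := (0:ℝ))).preimage (hcont v))
          (isClosed_iInter fun e => ?_)))
    by_cases he : e ∈ N.Ein ∪ N.Eout
    · have : {f : E → ℝ | e ∈ N.Ein ∪ N.Eout → f e ≤ g e} = {f : E → ℝ | f e ≤ g e} := by
        ext f; simp [he]
      rw [this]
      exact isClosed_le (continuous_apply e) continuous_const
    · have : {f : E → ℝ | e ∈ N.Ein ∪ N.Eout → f e ≤ g e} = Set.univ := by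
        ext f; simp [he]
      rw [this]
      exact isClosed_univ
  have hScompact : IsCompact S := by
    refine IsCompact.of_isClosed_subset (isCompact_Icc (a := (0 : E → ℝ)) (b := N.cap))
      hSclosed ?_
    rintro f ⟨⟨h0, hc, _⟩, _⟩
    exact ⟨fun e => h0 e, fun e => hc e⟩
  have hS0 : (fun _ => (0:ℝ)) ∈ S := ⟨N.feasible_zero, fun e he => hg e he⟩
  obtain ⟨fstar, hfS, hmax⟩ := hScompact.exists_isMaxOn ⟨_, hS0⟩
    ((continuous_finset_sum (N.Ein ∪ N.Eout) fun e _ => continuous_apply e).continuousOn)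
  obtain ⟨hfeas, hle⟩ := hfS
  obtain ⟨h0star, hcstar, hconsstar⟩ := (N.feasible_iff fstar).mp hfeas
  refine ⟨fstar, hfeas, ?_⟩
  by_contra hbad
  push_neg at hbad
  obtain ⟨e0, he0, hne0⟩ := hbad
  have hlt0 : fstar e0 < g e0 := lt_of_le_of_ne (hle e0 he0) hne0
  have hmax' : ∀ f' : E → ℝ, N.Feasible f' → (∀ e ∈ N.Ein ∪ N.Eout, f' e ≤ g e) →
      ∑ e ∈ N.Ein ∪ N.Eout, f' e ≤ ∑ e ∈ N.Ein ∪ N.Eout, fstar e := by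
    intro f' hf' hle'
    exact hmax (Set.mem_setOf_eq ▸ ⟨hf', hle'⟩)
  rcases Finset.mem_union.mp he0 with hin0 | hout0
  · -- e0 is a deficient input edge
    set T : Finset V :=
      Finset.univ.filter (fun v => Relation.ReflTransGen (N.step fstar) (N.head e0) v) with hT
    have hTmem : ∀ v, v ∈ T ↔ Relation.ReflTransGen (N.step fstar) (N.head e0) v := by
      intro v; simp [hT]
    have hB : ∀ e ∈ N.Eout, N.tail e ∈ T → fstar e = g e := by
      intro e he hTe
      by_contra hne'
      have hlt' : fstar e < g e := lt_of_le_of_ne (hle e (Finset.mem_union_right _ he)) hne'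
      obtain ⟨f', hf', hle', hgt⟩ := N.exists_better g fstar hfeas hle hin0 he hlt0 hlt'
        (hgcap_in e0 hin0) (hgcap_out e he) ((hTmem _).mp hTe)
      exact absurd (hmax' f' hf' hle') (not_le.mpr hgt)
    have hsat : ∀ e ∈ N.Eint, N.tail e ∈ T → N.head e ∉ T → fstar e = N.cap e := by
      intro e he hTe hnTe
      by_contra hne'
      have hstep : N.step fstar (N.tail e) (N.head e) :=
        Or.inl ⟨e, he, rfl, rfl, lt_of_le_of_ne (hcstar e) hne'⟩
      exact hnTe ((hTmem _).mpr (((hTmem _).mp hTe).tail hstep))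
    have hzero : ∀ e ∈ N.Eint, N.head e ∈ T → N.tail e ∉ T → fstar e = 0 := by
      intro e he hTe hnTe
      by_contra hne'
      have hstep : N.step fstar (N.head e) (N.tail e) :=
        Or.inr ⟨e, he, rfl, rfl, lt_of_le_of_ne (h0star e) (Ne.symm hne')⟩
      exact hnTe ((hTmem _).mpr (((hTmem _).mp hTe).tail hstep))
    set A : Finset E := N.Ein.filter (fun e => N.head e ∈ T) with hA
    set B : Finset E := N.Eout.filter (fun e => N.tail e ∈ T) with hBdef
    set C : ℝ := ∑ e ∈ N.Eint.filter (fun e => N.tail e ∈ T ∧ N.head e ∉ T), N.cap e with hC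
    have hcut : ∑ e ∈ A, fstar e
        + ∑ e ∈ N.Eint.filter (fun e => N.head e ∈ T ∧ N.tail e ∉ T), fstar e
      = ∑ e ∈ B, fstar e
        + ∑ e ∈ N.Eint.filter (fun e => N.tail e ∈ T ∧ N.head e ∉ T), fstar e :=
      N.cut_identity fstar hconsstar T
    have hz : ∑ e ∈ N.Eint.filter (fun e => N.head e ∈ T ∧ N.tail e ∉ T), fstar e = 0 :=
      Finset.sum_eq_zero fun e he => by
        obtain ⟨he1, he2, he3⟩ := Finset.mem_filter.mp he
        exact hzero e he1 he2 he3
    have hs : ∑ e ∈ N.Eint.filter (fun e => N.tail e ∈ T ∧ N.head e ∉ T), fstar e = C :=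
      Finset.sum_congr rfl fun e he => by
        obtain ⟨he1, he2, he3⟩ := Finset.mem_filter.mp he
        exact hsat e he1 he2 he3
    have hBsum : ∑ e ∈ B, fstar e = ∑ e ∈ B, g e :=
      Finset.sum_congr rfl fun e he => by
        obtain ⟨he1, he2⟩ := Finset.mem_filter.mp he
        exact hB e he1 he2
    have key1 : ∑ e ∈ A, fstar e = ∑ e ∈ B, g e + C := by
      linarith [hcut, hz, hs, hBsum]
    have hBsub : B ⊆ N.Eout := Finset.filter_subset _ _
    have hbound : N.maxFromTo A (N.Eout \ B) ≤ C := by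
      refine N.maxFromTo_le ?_
      intro f' hf' hv
      obtain ⟨h0', hc', hcons'⟩ := (N.feasible_iff f').mp hf'
      have hcut' : ∑ e ∈ A, f' e
          + ∑ e ∈ N.Eint.filter (fun e => N.head e ∈ T ∧ N.tail e ∉ T), f' e
        = ∑ e ∈ B, f' e
          + ∑ e ∈ N.Eint.filter (fun e => N.tail e ∈ T ∧ N.head e ∉ T), f' e :=
        N.cut_identity f' hcons' T
      have hB0 : ∑ e ∈ B, f' e = 0 :=
        Finset.sum_eq_zero fun e he =>
          hv e (Finset.mem_union_right _ (Finset.mem_sdiff.mpr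
            ⟨hBsub he, fun hc => (Finset.mem_sdiff.mp hc).2 he⟩))
      have hin_nonneg : 0 ≤ ∑ e ∈ N.Eint.filter (fun e => N.head e ∈ T ∧ N.tail e ∉ T), f' e :=
        Finset.sum_nonneg fun e _ => h0' e
      have hout_le : ∑ e ∈ N.Eint.filter (fun e => N.tail e ∈ T ∧ N.head e ∉ T), f' e ≤ C :=
        Finset.sum_le_sum fun e _ => hc' e
      linarith
    have hAB := (h A (Finset.filter_subset _ _) B hBsub).2
    have hAle : ∑ e ∈ A, g e ≤ ∑ e ∈ A, fstar e := by linarith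
    have hAlt : ∑ e ∈ A, fstar e < ∑ e ∈ A, g e := by
      refine Finset.sum_lt_sum (fun e he => hle e
        (Finset.mem_union_left _ (Finset.mem_filter.mp he).1)) ⟨e0, ?_, hlt0⟩
      exact Finset.mem_filter.mpr ⟨hin0, (hTmem _).mpr Relation.ReflTransGen.refl⟩
    linarith
  · -- e0 is a deficient output edge
    set T : Finset V :=
      Finset.univ.filter (fun v => Relation.ReflTransGen (N.step fstar) v (N.tail e0)) with hT
    have hTmem : ∀ v, v ∈ T ↔ Relation.ReflTransGen (N.step fstar) v (N.tail e0) := by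
      intro v; simp [hT]
    have hA : ∀ e ∈ N.Ein, N.head e ∈ T → fstar e = g e := by
      intro e he hTe
      by_contra hne'
      have hlt' : fstar e < g e := lt_of_le_of_ne (hle e (Finset.mem_union_left _ he)) hne'
      obtain ⟨f', hf', hle', hgt⟩ := N.exists_better g fstar hfeas hle he hout0 hlt' hlt0
        (hgcap_in e he) (hgcap_out e0 hout0) ((hTmem _).mp hTe)
      exact absurd (hmax' f' hf' hle') (not_le.mpr hgt)
    have hsat : ∀ e ∈ N.Eint, N.head e ∈ T → N.tail e ∉ T → fstar e = N.cap e := by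
      intro e he hTe hnTe
      by_contra hne'
      have hstep : N.step fstar (N.tail e) (N.head e) :=
        Or.inl ⟨e, he, rfl, rfl, lt_of_le_of_ne (hcstar e) hne'⟩
      exact hnTe ((hTmem _).mpr (Relation.ReflTransGen.head hstep ((hTmem _).mp hTe)))
    have hzero : ∀ e ∈ N.Eint, N.tail e ∈ T → N.head e ∉ T → fstar e = 0 := by
      intro e he hTe hnTe
      by_contra hne'
      have hstep : N.step fstar (N.head e) (N.tail e) :=
        Or.inr ⟨e, he, rfl, rfl, lt_of_le_of_ne (h0star e) (Ne.symm hne')⟩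
      exact hnTe ((hTmem _).mpr (Relation.ReflTransGen.head hstep ((hTmem _).mp hTe)))
    set A : Finset E := N.Ein.filter (fun e => N.head e ∈ T) with hAdef
    set B : Finset E := N.Eout.filter (fun e => N.tail e ∈ T) with hBdef
    set C : ℝ := ∑ e ∈ N.Eint.filter (fun e => N.head e ∈ T ∧ N.tail e ∉ T), N.cap e with hC
    have hcut : ∑ e ∈ A, fstar e
        + ∑ e ∈ N.Eint.filter (fun e => N.head e ∈ T ∧ N.tail e ∉ T), fstar e
      = ∑ e ∈ B, fstar e
        + ∑ e ∈ N.Eint.filter (fun e => N.tail e ∈ T ∧ N.head e ∉ T), fstar e :=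
      N.cut_identity fstar hconsstar T
    have hz : ∑ e ∈ N.Eint.filter (fun e => N.tail e ∈ T ∧ N.head e ∉ T), fstar e = 0 :=
      Finset.sum_eq_zero fun e he => by
        obtain ⟨he1, he2, he3⟩ := Finset.mem_filter.mp he
        exact hzero e he1 he2 he3
    have hs : ∑ e ∈ N.Eint.filter (fun e => N.head e ∈ T ∧ N.tail e ∉ T), fstar e = C :=
      Finset.sum_congr rfl fun e he => by
        obtain ⟨he1, he2, he3⟩ := Finset.mem_filter.mp he
        exact hsat e he1 he2 he3
    have hAsum : ∑ e ∈ A, fstar e = ∑ e ∈ A, g e :=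
      Finset.sum_congr rfl fun e he => by
        obtain ⟨he1, he2⟩ := Finset.mem_filter.mp he
        exact hA e he1 he2
    have key1 : ∑ e ∈ B, fstar e = ∑ e ∈ A, g e + C := by
      linarith [hcut, hz, hs, hAsum]
    have hAsub : A ⊆ N.Ein := Finset.filter_subset _ _
    have hBsub : B ⊆ N.Eout := Finset.filter_subset _ _
    have hbound : N.maxFromTo (N.Ein \ A) B ≤ C := by
      refine N.maxFromTo_le ?_
      intro f' hf' hv
      obtain ⟨h0', hc', hcons'⟩ := (N.feasible_iff f').mp hf'
      have hcut' : ∑ e ∈ A, f' e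
          + ∑ e ∈ N.Eint.filter (fun e => N.head e ∈ T ∧ N.tail e ∉ T), f' e
        = ∑ e ∈ B, f' e
          + ∑ e ∈ N.Eint.filter (fun e => N.tail e ∈ T ∧ N.head e ∉ T), f' e :=
        N.cut_identity f' hcons' T
      have hA0 : ∑ e ∈ A, f' e = 0 :=
        Finset.sum_eq_zero fun e he =>
          hv e (Finset.mem_union_left _ (Finset.mem_sdiff.mpr
            ⟨hAsub he, fun hc => (Finset.mem_sdiff.mp hc).2 he⟩))
      have hEout0 : ∑ e ∈ N.Eout \ B, f' e = 0 :=
        Finset.sum_eq_zero fun e he =>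
          hv e (Finset.mem_union_right _ he)
      have hglob := N.sum_Ein_eq_sum_Eout f' hcons'
      have hsplit1 : ∑ e ∈ N.Ein \ A, f' e + ∑ e ∈ A, f' e = ∑ e ∈ N.Ein, f' e :=
        Finset.sum_sdiff hAsub
      have hsplit2 : ∑ e ∈ N.Eout \ B, f' e + ∑ e ∈ B, f' e = ∑ e ∈ N.Eout, f' e :=
        Finset.sum_sdiff hBsub
      have hin_le : ∑ e ∈ N.Eint.filter (fun e => N.head e ∈ T ∧ N.tail e ∉ T), f' e ≤ C :=
        Finset.sum_le_sum fun e _ => hc' e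
      have hout_nonneg : 0 ≤ ∑ e ∈ N.Eint.filter (fun e => N.tail e ∈ T ∧ N.head e ∉ T), f' e :=
        Finset.sum_nonneg fun e _ => h0' e
      linarith
    have hAB := (h A hAsub B hBsub).1
    have hBle : ∑ e ∈ B, g e ≤ ∑ e ∈ B, fstar e := by linarith
    have hBlt : ∑ e ∈ B, fstar e < ∑ e ∈ B, g e := by
      refine Finset.sum_lt_sum (fun e he => hle e
        (Finset.mem_union_right _ (Finset.mem_filter.mp he).1)) ⟨e0, ?_, hlt0⟩
      exact Finset.mem_filter.mpr ⟨hout0, (hTmem _).mpr Relation.ReflTransGen.refl⟩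
    linarith

end FlowNetwork
end

section
/- Let N = (G, c) be a flow network and define τ* by τ*(A, B) := [−maxFromTo_N(Ein \ A, B), maxFromTo_N(A, Eout \ B)] for all A ⊆ Ein, B ⊆ Eout. Then τ* is a well-defined typing (i.e., −maxFromTo_N(Ein \ A, B) ≤ maxFromTo_N(A, Eout \ B) for all A, B) and τ* is a principal typing for N. -/
open Finset

namespace FlowNetwork

variable {V E : Type} [Fintype V] [Fintype E] [DecidableEq V] [DecidableEq E]

/-- A typing for `N` is (unbundled) a pair of maps `lo hi` giving, for each
`A ⊆ Ein` and `B ⊆ Eout`, the closed real interval `[lo A B, hi A B]`. -/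
def IsTyping (N : FlowNetwork V E) (lo hi : Finset E → Finset E → ℝ) : Prop :=
  ∀ A ⊆ N.Ein, ∀ B ⊆ N.Eout, lo A B ≤ hi A B

/-- An IO assignment `g` (a nonnegative function on `Ein ∪ Eout`, modelled as a
total function whose values elsewhere are irrelevant) satisfies the typing
`(lo, hi)` if `g(A) - g(B) ∈ [lo A B, hi A B]` for all `A ⊆ Ein`, `B ⊆ Eout`. -/
def SatisfiesTyping (N : FlowNetwork V E) (lo hi : Finset E → Finset E → ℝ)
    (g : E → ℝ) : Prop :=
  ∀ A ⊆ N.Ein, ∀ B ⊆ N.Eout,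
    lo A B ≤ ∑ e ∈ A, g e - ∑ e ∈ B, g e ∧
    ∑ e ∈ A, g e - ∑ e ∈ B, g e ≤ hi A B

/-- A typing is principal for `N` if it is complete (every feasible flow satisfies it)
and sound (every IO assignment satisfying it extends to a feasible flow). -/
def PrincipalTyping (N : FlowNetwork V E) (lo hi : Finset E → Finset E → ℝ) : Prop :=
  N.IsTyping lo hi ∧
  (∀ f : E → ℝ, N.Feasible f → N.SatisfiesTyping lo hi f) ∧
  (∀ g : E → ℝ, (∀ e ∈ N.Ein ∪ N.Eout, 0 ≤ g e) → N.SatisfiesTyping lo hi g →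
    ∃ f : E → ℝ, N.Feasible f ∧ ∀ e ∈ N.Ein ∪ N.Eout, f e = g e)

/-! ### auxiliary development -/

/-- capacity of the cut `S` for the transport problem from `A` to `B`. -/
def cutcap (N : FlowNetwork V E) (A B : Finset E) (S : Finset V) : ℝ :=
  ∑ e ∈ A.filter (fun e => N.head e ∉ S), N.cap e +
  ∑ e ∈ B.filter (fun e => N.tail e ∈ S), N.cap e +
  ∑ e ∈ N.Eint.filter (fun e => N.tail e ∈ S ∧ N.head e ∉ S), N.cap e

/-- admissible flows for the transport problem from `A` to `B`. -/
def Adm (N : FlowNetwork V E) (A B : Finset E) (f : E → ℝ) : Prop :=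
  N.Feasible f ∧ ∀ e ∈ (N.Ein \ A) ∪ (N.Eout \ B), f e = 0

lemma adm_zero (N : FlowNetwork V E) (A B : Finset E) : N.Adm A B (fun _ => 0) :=
  ⟨N.feasible_zero, fun e _ => rfl⟩

lemma maxFromTo_eq_sSup (N : FlowNetwork V E) (A B : Finset E) :
    N.maxFromTo A B = sSup ((fun f => ∑ e ∈ A, f e) '' {f | N.Adm A B f}) := by
  unfold maxFromTo
  congr 1
  ext x
  constructor
  · rintro ⟨f, hf, hv, rfl⟩; exact ⟨f, ⟨hf, hv⟩, rfl⟩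
  · rintro ⟨f, ⟨hf, hv⟩, rfl⟩; exact ⟨f, hf, hv, rfl⟩

lemma valSet_nonempty (N : FlowNetwork V E) (A B : Finset E) :
    ((fun f => ∑ e ∈ A, f e) '' {f | N.Adm A B f}).Nonempty :=
  ⟨0, (fun _ => 0), N.adm_zero A B, by simp⟩

lemma valSet_bddAbove (N : FlowNetwork V E) (A B : Finset E) :
    BddAbove ((fun f => ∑ e ∈ A, f e) '' {f | N.Adm A B f}) := by
  refine ⟨∑ e ∈ A, N.cap e, ?_⟩
  rintro x ⟨f, hf, rfl⟩
  exact Finset.sum_le_sum fun e _ => hf.1.2.1 e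

/-- summed conservation over a set `S` of vertices. -/
lemma star (N : FlowNetwork V E) {f : E → ℝ} (hf : N.Feasible f) (S : Finset V) :
    ∑ e ∈ N.Ein.filter (fun e => N.head e ∈ S), f e +
      ∑ e ∈ N.Eint.filter (fun e => N.head e ∈ S), f e =
    ∑ e ∈ N.Eout.filter (fun e => N.tail e ∈ S), f e +
      ∑ e ∈ N.Eint.filter (fun e => N.tail e ∈ S), f e := by
  have h1 : ∑ v ∈ S, ∑ e ∈ (N.Ein ∪ N.Eint).filter (fun e => N.head e = v), f e =
      ∑ e ∈ (N.Ein ∪ N.Eint).filter (fun e => N.head e ∈ S), f e :=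
    Finset.sum_fiberwise_eq_sum_filter _ _ _ _
  have h2 : ∑ v ∈ S, ∑ e ∈ (N.Eout ∪ N.Eint).filter (fun e => N.tail e = v), f e =
      ∑ e ∈ (N.Eout ∪ N.Eint).filter (fun e => N.tail e ∈ S), f e :=
    Finset.sum_fiberwise_eq_sum_filter _ _ _ _
  have h3 : ∑ e ∈ (N.Ein ∪ N.Eint).filter (fun e => N.head e ∈ S), f e =
      ∑ e ∈ (N.Eout ∪ N.Eint).filter (fun e => N.tail e ∈ S), f e := by
    rw [← h1, ← h2]
    exact Finset.sum_congr rfl fun v _ => hf.2.2 v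
  rwa [Finset.filter_union, Finset.filter_union,
    Finset.sum_union (Finset.disjoint_filter_filter N.disj_in_int),
    Finset.sum_union (Finset.disjoint_filter_filter N.disj_out_int)] at h3

/-- a sum split helper over sub-finsets. -/
lemma sum_split_subset {X T : Finset E} (hXT : X ⊆ T) (p : E → Prop) [DecidablePred p]
    (f : E → ℝ) :
    ∑ e ∈ T.filter p, f e = ∑ e ∈ X.filter p, f e + ∑ e ∈ (T \ X).filter p, f e := by
  rw [← Finset.sum_union (Finset.disjoint_filter_filter (Finset.disjoint_sdiff)),
    ← Finset.filter_union, Finset.union_sdiff_of_subset hXT]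

lemma sum_split_pred (T : Finset E) (p q : E → Prop) [DecidablePred p] [DecidablePred q]
    (f : E → ℝ) :
    ∑ e ∈ T.filter p, f e =
      ∑ e ∈ T.filter (fun e => p e ∧ q e), f e +
      ∑ e ∈ T.filter (fun e => p e ∧ ¬ q e), f e := by
  rw [← Finset.filter_filter, ← Finset.filter_filter,
    Finset.sum_filter_add_sum_filter_not]

/-- Weak duality, upper form. -/
lemma weakW (N : FlowNetwork V E) {f : E → ℝ} (hf : N.Feasible f) {X Y : Finset E}
    (hX : X ⊆ N.Ein) (hY : Y ⊆ N.Eout) (S : Finset V) :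
    ∑ e ∈ X, f e - ∑ e ∈ Y, f e ≤ N.cutcap X (N.Eout \ Y) S := by
  have hstar := N.star hf S
  have hXsplit : ∑ e ∈ X, f e =
      ∑ e ∈ X.filter (fun e => N.head e ∈ S), f e +
      ∑ e ∈ X.filter (fun e => ¬ N.head e ∈ S), f e :=
    (Finset.sum_filter_add_sum_filter_not _ _ _).symm
  have hXin : ∑ e ∈ X.filter (fun e => N.head e ∈ S), f e ≤
      ∑ e ∈ N.Ein.filter (fun e => N.head e ∈ S), f e :=
    Finset.sum_le_sum_of_subset_of_nonneg
      (Finset.filter_subset_filter _ hX) (fun e _ _ => hf.1 e)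
  have hEout : ∑ e ∈ N.Eout.filter (fun e => N.tail e ∈ S), f e =
      ∑ e ∈ Y.filter (fun e => N.tail e ∈ S), f e +
      ∑ e ∈ (N.Eout \ Y).filter (fun e => N.tail e ∈ S), f e :=
    sum_split_subset hY _ f
  have hYle : ∑ e ∈ Y.filter (fun e => N.tail e ∈ S), f e ≤ ∑ e ∈ Y, f e :=
    Finset.sum_le_sum_of_subset_of_nonneg (Finset.filter_subset _ _) (fun e _ _ => hf.1 e)
  have hIt : ∑ e ∈ N.Eint.filter (fun e => N.tail e ∈ S), f e =
      ∑ e ∈ N.Eint.filter (fun e => N.tail e ∈ S ∧ N.head e ∈ S), f e +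
      ∑ e ∈ N.Eint.filter (fun e => N.tail e ∈ S ∧ ¬ N.head e ∈ S), f e :=
    sum_split_pred _ _ _ f
  have hIh : ∑ e ∈ N.Eint.filter (fun e => N.head e ∈ S), f e =
      ∑ e ∈ N.Eint.filter (fun e => N.tail e ∈ S ∧ N.head e ∈ S), f e +
      ∑ e ∈ N.Eint.filter (fun e => ¬ N.tail e ∈ S ∧ N.head e ∈ S), f e := by
    rw [sum_split_pred N.Eint (fun e => N.head e ∈ S) (fun e => N.tail e ∈ S) f]
    rw [Finset.filter_congr (fun e _ => by tauto : ∀ e ∈ N.Eint,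
        ((N.head e ∈ S ∧ N.tail e ∈ S) ↔ (N.tail e ∈ S ∧ N.head e ∈ S))),
      Finset.filter_congr (fun e _ => by tauto : ∀ e ∈ N.Eint,
        ((N.head e ∈ S ∧ ¬ N.tail e ∈ S) ↔ (¬ N.tail e ∈ S ∧ N.head e ∈ S)))]
  have c1 : ∑ e ∈ X.filter (fun e => ¬ N.head e ∈ S), f e ≤
      ∑ e ∈ X.filter (fun e => ¬ N.head e ∈ S), N.cap e :=
    Finset.sum_le_sum fun e _ => hf.2.1 e
  have c2 : ∑ e ∈ (N.Eout \ Y).filter (fun e => N.tail e ∈ S), f e ≤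
      ∑ e ∈ (N.Eout \ Y).filter (fun e => N.tail e ∈ S), N.cap e :=
    Finset.sum_le_sum fun e _ => hf.2.1 e
  have c3 : ∑ e ∈ N.Eint.filter (fun e => N.tail e ∈ S ∧ ¬ N.head e ∈ S), f e ≤
      ∑ e ∈ N.Eint.filter (fun e => N.tail e ∈ S ∧ ¬ N.head e ∈ S), N.cap e :=
    Finset.sum_le_sum fun e _ => hf.2.1 e
  have c4 : 0 ≤ ∑ e ∈ N.Eint.filter (fun e => ¬ N.tail e ∈ S ∧ N.head e ∈ S), f e :=
    Finset.sum_nonneg fun e _ => hf.1 e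
  unfold cutcap
  linarith

lemma star_compl (N : FlowNetwork V E) {f : E → ℝ} (hf : N.Feasible f) (S : Finset V) :
    ∑ e ∈ N.Ein.filter (fun e => ¬ N.head e ∈ S), f e +
      ∑ e ∈ N.Eint.filter (fun e => ¬ N.head e ∈ S), f e =
    ∑ e ∈ N.Eout.filter (fun e => ¬ N.tail e ∈ S), f e +
      ∑ e ∈ N.Eint.filter (fun e => ¬ N.tail e ∈ S), f e := by
  have h := N.star hf Sᶜ
  simpa only [Finset.mem_compl] using h

/-- Weak duality, lower form. -/
lemma weakW2 (N : FlowNetwork V E) {f : E → ℝ} (hf : N.Feasible f) {X Y : Finset E}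
    (hX : X ⊆ N.Ein) (hY : Y ⊆ N.Eout) (S : Finset V) :
    ∑ e ∈ Y, f e - ∑ e ∈ X, f e ≤ N.cutcap (N.Ein \ X) Y S := by
  have hstar := N.star_compl hf S
  have hYsplit : ∑ e ∈ Y, f e =
      ∑ e ∈ Y.filter (fun e => N.tail e ∈ S), f e +
      ∑ e ∈ Y.filter (fun e => ¬ N.tail e ∈ S), f e :=
    (Finset.sum_filter_add_sum_filter_not _ _ _).symm
  have hYin : ∑ e ∈ Y.filter (fun e => ¬ N.tail e ∈ S), f e ≤
      ∑ e ∈ N.Eout.filter (fun e => ¬ N.tail e ∈ S), f e :=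
    Finset.sum_le_sum_of_subset_of_nonneg
      (Finset.filter_subset_filter _ hY) (fun e _ _ => hf.1 e)
  have hEinsplit : ∑ e ∈ N.Ein.filter (fun e => ¬ N.head e ∈ S), f e =
      ∑ e ∈ X.filter (fun e => ¬ N.head e ∈ S), f e +
      ∑ e ∈ (N.Ein \ X).filter (fun e => ¬ N.head e ∈ S), f e :=
    sum_split_subset hX _ f
  have hXle : ∑ e ∈ X.filter (fun e => ¬ N.head e ∈ S), f e ≤ ∑ e ∈ X, f e :=
    Finset.sum_le_sum_of_subset_of_nonneg (Finset.filter_subset _ _) (fun e _ _ => hf.1 e)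
  have hIh : ∑ e ∈ N.Eint.filter (fun e => ¬ N.head e ∈ S), f e =
      ∑ e ∈ N.Eint.filter (fun e => N.tail e ∈ S ∧ ¬ N.head e ∈ S), f e +
      ∑ e ∈ N.Eint.filter (fun e => ¬ N.tail e ∈ S ∧ ¬ N.head e ∈ S), f e := by
    rw [sum_split_pred N.Eint (fun e => ¬ N.head e ∈ S) (fun e => N.tail e ∈ S) f]
    rw [Finset.filter_congr (fun e _ => by tauto : ∀ e ∈ N.Eint,
        ((¬ N.head e ∈ S ∧ N.tail e ∈ S) ↔ (N.tail e ∈ S ∧ ¬ N.head e ∈ S))),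
      Finset.filter_congr (fun e _ => by tauto : ∀ e ∈ N.Eint,
        ((¬ N.head e ∈ S ∧ ¬ N.tail e ∈ S) ↔ (¬ N.tail e ∈ S ∧ ¬ N.head e ∈ S)))]
  have hIt : ∑ e ∈ N.Eint.filter (fun e => ¬ N.tail e ∈ S), f e =
      ∑ e ∈ N.Eint.filter (fun e => ¬ N.tail e ∈ S ∧ N.head e ∈ S), f e +
      ∑ e ∈ N.Eint.filter (fun e => ¬ N.tail e ∈ S ∧ ¬ N.head e ∈ S), f e := by
    rw [sum_split_pred N.Eint (fun e => ¬ N.tail e ∈ S) (fun e => N.head e ∈ S) f]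
  have c1 : ∑ e ∈ Y.filter (fun e => N.tail e ∈ S), f e ≤
      ∑ e ∈ Y.filter (fun e => N.tail e ∈ S), N.cap e :=
    Finset.sum_le_sum fun e _ => hf.2.1 e
  have c2 : ∑ e ∈ (N.Ein \ X).filter (fun e => ¬ N.head e ∈ S), f e ≤
      ∑ e ∈ (N.Ein \ X).filter (fun e => ¬ N.head e ∈ S), N.cap e :=
    Finset.sum_le_sum fun e _ => hf.2.1 e
  have c3 : ∑ e ∈ N.Eint.filter (fun e => N.tail e ∈ S ∧ ¬ N.head e ∈ S), f e ≤
      ∑ e ∈ N.Eint.filter (fun e => N.tail e ∈ S ∧ ¬ N.head e ∈ S), N.cap e :=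
    Finset.sum_le_sum fun e _ => hf.2.1 e
  have c4 : 0 ≤ ∑ e ∈ N.Eint.filter (fun e => ¬ N.tail e ∈ S ∧ N.head e ∈ S), f e :=
    Finset.sum_nonneg fun e _ => hf.1 e
  unfold cutcap
  linarith

lemma maxFromTo_le_cutcap (N : FlowNetwork V E) {A B : Finset E}
    (hA : A ⊆ N.Ein) (hB : B ⊆ N.Eout) (S : Finset V) :
    N.maxFromTo A B ≤ N.cutcap A B S := by
  rw [maxFromTo_eq_sSup]
  refine csSup_le (N.valSet_nonempty A B) ?_
  rintro x ⟨f, ⟨hfeas, hvan⟩, rfl⟩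
  have hYzero : ∑ e ∈ N.Eout \ B, f e = 0 :=
    Finset.sum_eq_zero fun e he => hvan e (Finset.mem_union_right _ he)
  have := N.weakW hfeas hA (Finset.sdiff_subset : N.Eout \ B ⊆ N.Eout) S
  rw [hYzero, Finset.sdiff_sdiff_eq_self hB] at this
  simpa using this

lemma exists_maxflow (N : FlowNetwork V E) (A B : Finset E) :
    ∃ f : E → ℝ, N.Adm A B f ∧ (∀ g, N.Adm A B g → ∑ e ∈ A, g e ≤ ∑ e ∈ A, f e) ∧
      N.maxFromTo A B = ∑ e ∈ A, f e := by
  have hsumcont : ∀ T : Finset E, Continuous (fun f : E → ℝ => ∑ e ∈ T, f e) :=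
    fun T => continuous_finset_sum T (fun i _ => continuous_apply i)
  have hclosed : IsClosed {f : E → ℝ | N.Adm A B f} := by
    have : {f : E → ℝ | N.Adm A B f} =
        (⋂ e : E, {f : E → ℝ | 0 ≤ f e}) ∩
        (⋂ e : E, {f : E → ℝ | f e ≤ N.cap e}) ∩
        (⋂ v : V, {f : E → ℝ |
          ∑ e ∈ (N.Ein ∪ N.Eint).filter (fun e => N.head e = v), f e =
          ∑ e ∈ (N.Eout ∪ N.Eint).filter (fun e => N.tail e = v), f e}) ∩
        (⋂ e ∈ (N.Ein \ A ∪ N.Eout \ B : Finset E), {f : E → ℝ | f e = 0}) := by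
      ext f
      simp only [Set.mem_setOf_eq, Set.mem_inter_iff, Set.mem_iInter, Adm, Feasible]
      tauto
    rw [this]
    refine IsClosed.inter (IsClosed.inter (IsClosed.inter ?_ ?_) ?_) ?_
    · exact isClosed_iInter fun e => isClosed_le continuous_const (continuous_apply e)
    · exact isClosed_iInter fun e => isClosed_le (continuous_apply e) continuous_const
    · exact isClosed_iInter fun v => isClosed_eq (hsumcont _) (hsumcont _)
    · exact isClosed_iInter fun e => isClosed_iInter fun _ =>
        isClosed_eq (continuous_apply e) continuous_const
  have hsub : {f : E → ℝ | N.Adm A B f} ⊆ Set.pi Set.univ (fun e => Set.Icc 0 (N.cap e)) := by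
    intro f hf e _
    exact ⟨hf.1.1 e, hf.1.2.1 e⟩
  have hcomp : IsCompact {f : E → ℝ | N.Adm A B f} :=
    IsCompact.of_isClosed_subset (isCompact_univ_pi fun e => isCompact_Icc) hclosed hsub
  have hne : ({f : E → ℝ | N.Adm A B f}).Nonempty := ⟨(fun _ => 0), N.adm_zero A B⟩
  obtain ⟨f, hfK, hmax⟩ := hcomp.exists_isMaxOn hne ((hsumcont A).continuousOn)
  refine ⟨f, hfK, fun g hg => hmax hg, ?_⟩
  rw [maxFromTo_eq_sSup]
  exact IsGreatest.csSup_eq ⟨⟨f, hfK, rfl⟩, by rintro x ⟨g, hg, rfl⟩; exact hmax hg⟩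

/-! ### residual paths -/

/-- residual path for flow `f`: list of (edge, direction) steps. -/
inductive IsPath (N : FlowNetwork V E) (f : E → ℝ) : V → List (E × Bool) → V → Prop
  | nil (u : V) : IsPath N f u [] u
  | fwd {u w : V} {e : E} {L : List (E × Bool)} (he : e ∈ N.Eint) (ht : N.tail e = u)
      (hs : f e < N.cap e) (hp : IsPath N f (N.head e) L w) :
      IsPath N f u ((e, true) :: L) w
  | bwd {u w : V} {e : E} {L : List (E × Bool)} (he : e ∈ N.Eint) (hh : N.head e = u)
      (hs : 0 < f e) (hp : IsPath N f (N.tail e) L w) :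
      IsPath N f u ((e, false) :: L) w

/-- the vertices visited by a path starting at `u`. -/
def pverts (N : FlowNetwork V E) : V → List (E × Bool) → List V
  | u, [] => [u]
  | u, (e, b) :: L => u :: pverts N (if b then N.head e else N.tail e) L

@[simp] lemma pverts_nil (N : FlowNetwork V E) (u : V) : pverts N u [] = [u] := rfl

@[simp] lemma pverts_cons (N : FlowNetwork V E) (u : V) (e : E) (b : Bool)
    (L : List (E × Bool)) :
    pverts N u ((e, b) :: L) = u :: pverts N (if b then N.head e else N.tail e) L := rfl

lemma start_mem_pverts (N : FlowNetwork V E) (u : V) (L : List (E × Bool)) :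
    u ∈ pverts N u L := by
  cases L with
  | nil => simp [pverts]
  | cons p L => cases p with | mk e b => simp [pverts]

lemma path_append {N : FlowNetwork V E} {f : E → ℝ} {u v w : V}
    {L₁ L₂ : List (E × Bool)} (h₁ : IsPath N f u L₁ v) (h₂ : IsPath N f v L₂ w) :
    IsPath N f u (L₁ ++ L₂) w := by
  induction h₁ with
  | nil => exact h₂
  | fwd he ht hs hp ih => exact .fwd he ht hs (ih h₂)
  | bwd he hh hs hp ih => exact .bwd he hh hs (ih h₂)

lemma rtg_path {N : FlowNetwork V E} {f : E → ℝ}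
    {r : V → V → Prop}
    (hr : ∀ x y, r x y →
      (∃ e ∈ N.Eint, N.tail e = x ∧ N.head e = y ∧ f e < N.cap e) ∨
      (∃ e ∈ N.Eint, N.head e = x ∧ N.tail e = y ∧ 0 < f e))
    {u w : V} (h : Relation.ReflTransGen r u w) : ∃ L, IsPath N f u L w := by
  induction h with
  | refl => exact ⟨[], .nil u⟩
  | tail _ hbc ih =>
    obtain ⟨L, hL⟩ := ih
    rcases hr _ _ hbc with ⟨e, he, ht, hh, hs⟩ | ⟨e, he, hh, ht, hs⟩
    · exact ⟨L ++ [(e, true)], path_append hL (.fwd he ht hs (hh ▸ .nil _))⟩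
    · exact ⟨L ++ [(e, false)], path_append hL (.bwd he hh hs (ht ▸ .nil _))⟩

/-- from any visited vertex there is a path suffix to the end. -/
lemma mem_pverts_suffix {N : FlowNetwork V E} {f : E → ℝ} {u w v : V}
    {L : List (E × Bool)} (hp : IsPath N f u L w) (hv : v ∈ pverts N u L) :
    ∃ L₂, IsPath N f v L₂ w ∧ (pverts N v L₂) <:+ (pverts N u L) := by
  induction hp with
  | nil u =>
    simp only [pverts_nil, List.mem_singleton] at hv
    exact ⟨[], hv ▸ .nil v, by simp [hv]⟩
  | @fwd u' w' e L' he ht hs hp ih =>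
    rw [pverts_cons] at hv
    simp only [if_pos rfl, List.mem_cons] at hv
    rcases hv with rfl | hv
    · exact ⟨(e, true) :: L', .fwd he ht hs hp, by simp⟩
    · obtain ⟨L₂, h₂, hsuf⟩ := ih hv
      exact ⟨L₂, h₂, hsuf.trans ⟨[u'], by simp⟩⟩
  | @bwd u' w' e L' he hh hs hp ih =>
    rw [pverts_cons] at hv
    simp only [if_neg (by simp : ¬(false : Bool) = true), List.mem_cons] at hv
    rcases hv with rfl | hv
    · exact ⟨(e, false) :: L', .bwd he hh hs hp, by simp⟩
    · obtain ⟨L₂, h₂, hsuf⟩ := ih hv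
      exact ⟨L₂, h₂, hsuf.trans ⟨[u'], by simp⟩⟩

lemma exists_nodup_path {N : FlowNetwork V E} {f : E → ℝ} {u w : V}
    {L : List (E × Bool)} (hp : IsPath N f u L w) :
    ∃ L', IsPath N f u L' w ∧ (pverts N u L').Nodup := by
  induction hp with
  | nil u => exact ⟨[], .nil u, by simp⟩
  | @fwd u' w' e L' he ht hs hp ih =>
    obtain ⟨L'', h'', hnd⟩ := ih
    by_cases hu : u' ∈ pverts N (N.head e) L''
    · obtain ⟨L₂, h₂, hsuf⟩ := mem_pverts_suffix h'' hu
      exact ⟨L₂, h₂, hnd.sublist hsuf.sublist⟩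
    · exact ⟨(e, true) :: L'', .fwd he ht hs h'', by
        rw [pverts_cons, if_pos rfl]; exact List.nodup_cons.mpr ⟨hu, hnd⟩⟩
  | @bwd u' w' e L' he hh hs hp ih =>
    obtain ⟨L'', h'', hnd⟩ := ih
    by_cases hu : u' ∈ pverts N (N.tail e) L''
    · obtain ⟨L₂, h₂, hsuf⟩ := mem_pverts_suffix h'' hu
      exact ⟨L₂, h₂, hnd.sublist hsuf.sublist⟩
    · exact ⟨(e, false) :: L'', .bwd he hh hs h'', by
        rw [pverts_cons, if_neg (by simp : ¬(false : Bool) = true)]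
        exact List.nodup_cons.mpr ⟨hu, hnd⟩⟩

lemma path_mem_facts {N : FlowNetwork V E} {f : E → ℝ} {u w : V}
    {L : List (E × Bool)} (hp : IsPath N f u L w) {e : E} {b : Bool}
    (hm : (e, b) ∈ L) :
    e ∈ N.Eint ∧ (b = true → f e < N.cap e) ∧ (b = false → 0 < f e) := by
  induction hp with
  | nil => simp at hm
  | @fwd u' w' e' L' he ht hs hp ih =>
    rcases List.mem_cons.mp hm with h | h
    · obtain ⟨rfl, rfl⟩ := Prod.mk.injEq .. ▸ h
      cases h; exact ⟨he, fun _ => hs, fun hf => by simp at hf⟩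
    · exact ih h
  | @bwd u' w' e' L' he hh hs hp ih =>
    rcases List.mem_cons.mp hm with h | h
    · cases h; exact ⟨he, fun ht => by simp at ht, fun _ => hs⟩
    · exact ih h

lemma path_endpoints_mem {N : FlowNetwork V E} {f : E → ℝ} {u w : V}
    {L : List (E × Bool)} (hp : IsPath N f u L w) {e : E} {b : Bool}
    (hm : (e, b) ∈ L) :
    N.tail e ∈ pverts N u L ∧ N.head e ∈ pverts N u L := by
  induction hp with
  | nil => simp at hm
  | @fwd u' w' e' L' he ht hs hp ih =>
    rw [pverts_cons, if_pos rfl]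
    rcases List.mem_cons.mp hm with h | h
    · cases h
      exact ⟨by rw [ht]; exact List.mem_cons_self,
        List.mem_cons_of_mem _ (start_mem_pverts N _ L')⟩
    · obtain ⟨h1, h2⟩ := ih h
      exact ⟨List.mem_cons_of_mem _ h1, List.mem_cons_of_mem _ h2⟩
  | @bwd u' w' e' L' he hh hs hp ih =>
    rw [pverts_cons, if_neg (by simp : ¬(false : Bool) = true)]
    rcases List.mem_cons.mp hm with h | h
    · cases h
      exact ⟨List.mem_cons_of_mem _ (start_mem_pverts N _ L'),
        by rw [hh]; exact List.mem_cons_self⟩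
    · obtain ⟨h1, h2⟩ := ih h
      exact ⟨List.mem_cons_of_mem _ h1, List.mem_cons_of_mem _ h2⟩

/-- signed indicator of an edge being used by the path. -/
def pcoef (L : List (E × Bool)) (e : E) : ℝ :=
  (if (e, true) ∈ L then 1 else 0) - (if (e, false) ∈ L then 1 else 0)

@[simp] lemma pcoef_nil (e : E) : pcoef ([] : List (E × Bool)) e = 0 := by simp [pcoef]

lemma pcoef_of_not_mem {L : List (E × Bool)} {e : E}
    (h : ∀ b, (e, b) ∉ L) : pcoef L e = 0 := by
  simp [pcoef, h true, h false]

/-- the first edge of a nodup path does not occur later. -/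
lemma head_not_mem_tail {N : FlowNetwork V E} {f : E → ℝ} {u w : V} {e : E} {b : Bool}
    {L : List (E × Bool)} (hp : IsPath N f u ((e, b) :: L) w)
    (hnd : (pverts N u ((e, b) :: L)).Nodup) : ∀ b', (e, b') ∉ L := by
  intro b' hmem
  cases hp with
  | fwd he ht hs hp' =>
    rw [pverts_cons, if_pos rfl, List.nodup_cons] at hnd
    exact hnd.1 (ht ▸ (path_endpoints_mem hp' hmem).1)
  | bwd he hh hs hp' =>
    rw [pverts_cons, if_neg (by simp : ¬(false : Bool) = true), List.nodup_cons] at hnd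
    exact hnd.1 (hh ▸ (path_endpoints_mem hp' hmem).2)

lemma pcoef_cons_of_not_mem {L : List (E × Bool)} {e : E} {b : Bool}
    (hT : (e, true) ∉ L) (hF : (e, false) ∉ L) (e' : E) :
    pcoef ((e, b) :: L) e' = pcoef L e' + if e' = e then (if b then 1 else -1) else 0 := by
  by_cases h : e' = e
  · subst h
    cases b <;> simp [pcoef, List.mem_cons, hT, hF]
  · simp [pcoef, List.mem_cons, Prod.mk.injEq, h]

/-- a positive augmentation amount that fits all residual capacities along the path. -/
lemma exists_delta {N : FlowNetwork V E} {f : E → ℝ} {u w : V}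
    {L : List (E × Bool)} (hp : IsPath N f u L w) :
    ∃ δ : ℝ, 0 < δ ∧ ∀ p ∈ L, (p.2 = true → f p.1 + δ ≤ N.cap p.1) ∧
      (p.2 = false → δ ≤ f p.1) := by
  induction hp with
  | nil => exact ⟨1, one_pos, by simp⟩
  | @fwd u' w' e L' he ht hs hp ih =>
    obtain ⟨δ, hδ, hall⟩ := ih
    refine ⟨min δ (N.cap e - f e), lt_min hδ (by linarith), ?_⟩
    rintro ⟨e', b'⟩ hmem
    rcases List.mem_cons.mp hmem with h | h
    · cases h
      refine ⟨fun _ => by have := min_le_right δ (N.cap e - f e); linarith,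
        fun hb => by simp at hb⟩
    · obtain ⟨h1, h2⟩ := hall _ h
      have hm := min_le_left δ (N.cap e - f e)
      exact ⟨fun hb => by have := h1 hb; linarith,
        fun hb => by have := h2 hb; linarith⟩
  | @bwd u' w' e L' he hh hs hp ih =>
    obtain ⟨δ, hδ, hall⟩ := ih
    refine ⟨min δ (f e), lt_min hδ (by linarith), ?_⟩
    rintro ⟨e', b'⟩ hmem
    rcases List.mem_cons.mp hmem with h | h
    · cases h
      exact ⟨fun hb => by simp at hb, fun _ => min_le_right δ (f e)⟩
    · obtain ⟨h1, h2⟩ := hall _ h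
      have hm := min_le_left δ (f e)
      exact ⟨fun hb => by have := h1 hb; linarith,
        fun hb => by have := h2 hb; linarith⟩

/-- divergence identity for the path coefficients. -/
lemma pdiv {N : FlowNetwork V E} {f : E → ℝ} {u w : V} {L : List (E × Bool)}
    (hp : IsPath N f u L w) :
    (pverts N u L).Nodup → ∀ v : V,
    ∑ e ∈ N.Eint.filter (fun e => N.head e = v), pcoef L e -
    ∑ e ∈ N.Eint.filter (fun e => N.tail e = v), pcoef L e =
    (if w = v then 1 else 0) - (if u = v then 1 else 0) := by
  induction hp with
  | nil u => intro _ v; simp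
  | @fwd u' w' e L' he ht hs hp ih =>
    intro hnd v
    have hnd' : (pverts N (N.head e) L').Nodup := by
      rw [pverts_cons, if_pos rfl, List.nodup_cons] at hnd; exact hnd.2
    have hT := head_not_mem_tail (.fwd he ht hs hp) hnd true
    have hF := head_not_mem_tail (.fwd he ht hs hp) hnd false
    have hcoef := pcoef_cons_of_not_mem (b := true) hT hF
    have hsum : ∀ (p : E → Prop) (_ : DecidablePred p),
        ∑ e' ∈ N.Eint.filter p, pcoef ((e, true) :: L') e' =
        ∑ e' ∈ N.Eint.filter p, pcoef L' e' +
          (if e ∈ N.Eint.filter p then (1:ℝ) else 0) := by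
      intro p hdp
      rw [Finset.sum_congr rfl (fun e' _ => hcoef e'), Finset.sum_add_distrib]
      congr 1
      rw [Finset.sum_ite_eq' (N.Eint.filter p) e (fun _ => if true then (1:ℝ) else -1)]
      simp
    rw [hsum _ _, hsum _ _]
    have hIH := ih hnd' v
    have h1 : (if e ∈ N.Eint.filter (fun e' => N.head e' = v) then (1:ℝ) else 0) =
        if N.head e = v then 1 else 0 := by
      by_cases h : N.head e = v <;> simp [Finset.mem_filter, he, h]
    have h2 : (if e ∈ N.Eint.filter (fun e' => N.tail e' = v) then (1:ℝ) else 0) =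
        if u' = v then 1 else 0 := by
      rw [← ht]; by_cases h : N.tail e = v <;> simp [Finset.mem_filter, he, h]
    rw [h1, h2]
    by_cases hh : N.head e = v <;> simp [hh] at hIH ⊢ <;> linarith
  | @bwd u' w' e L' he hh hs hp ih =>
    intro hnd v
    have hnd' : (pverts N (N.tail e) L').Nodup := by
      rw [pverts_cons, if_neg (by simp : ¬(false : Bool) = true), List.nodup_cons] at hnd
      exact hnd.2
    have hT := head_not_mem_tail (.bwd he hh hs hp) hnd true
    have hF := head_not_mem_tail (.bwd he hh hs hp) hnd false
    have hcoef := pcoef_cons_of_not_mem (b := false) hT hF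
    have hsum : ∀ (p : E → Prop) (_ : DecidablePred p),
        ∑ e' ∈ N.Eint.filter p, pcoef ((e, false) :: L') e' =
        ∑ e' ∈ N.Eint.filter p, pcoef L' e' +
          (if e ∈ N.Eint.filter p then (-1:ℝ) else 0) := by
      intro p hdp
      rw [Finset.sum_congr rfl (fun e' _ => hcoef e'), Finset.sum_add_distrib]
      congr 1
      rw [Finset.sum_ite_eq' (N.Eint.filter p) e (fun _ => if false then (1:ℝ) else -1)]
      simp
    rw [hsum _ _, hsum _ _]
    have hIH := ih hnd' v
    have h1 : (if e ∈ N.Eint.filter (fun e' => N.head e' = v) then (-1:ℝ) else 0) =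
        if u' = v then -1 else 0 := by
      rw [← hh]; by_cases h : N.head e = v <;> simp [Finset.mem_filter, he, h]
    have h2 : (if e ∈ N.Eint.filter (fun e' => N.tail e' = v) then (-1:ℝ) else 0) =
        if N.tail e = v then -1 else 0 := by
      by_cases h : N.tail e = v <;> simp [Finset.mem_filter, he, h]
    rw [h1, h2]
    by_cases ht : N.tail e = v <;> by_cases hu : u' = v <;>
      simp [ht, hu] at hIH ⊢ <;> linarith

lemma path_not_both {N : FlowNetwork V E} {f : E → ℝ} {u w : V}
    {L : List (E × Bool)} (hp : IsPath N f u L w) :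
    (pverts N u L).Nodup → ∀ e : E, ¬ ((e, true) ∈ L ∧ (e, false) ∈ L) := by
  induction hp with
  | nil => simp
  | @fwd u' w' e' L' he ht hs hp ih =>
    intro hnd e ⟨hT, hF⟩
    have hnd' : (pverts N (N.head e') L').Nodup := by
      rw [pverts_cons, if_pos rfl, List.nodup_cons] at hnd; exact hnd.2
    have hnt := head_not_mem_tail (.fwd he ht hs hp) hnd
    rcases List.mem_cons.mp hT with h | h
    · cases h
      rcases List.mem_cons.mp hF with h' | h'
      · simp at h'
      · exact hnt false h'
    · rcases List.mem_cons.mp hF with h' | h'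
      · simp at h'
      · exact ih hnd' e ⟨h, h'⟩
  | @bwd u' w' e' L' he hh hs hp ih =>
    intro hnd e ⟨hT, hF⟩
    have hnd' : (pverts N (N.tail e') L').Nodup := by
      rw [pverts_cons, if_neg (by simp : ¬(false : Bool) = true), List.nodup_cons] at hnd
      exact hnd.2
    have hnt := head_not_mem_tail (.bwd he hh hs hp) hnd
    rcases List.mem_cons.mp hF with h | h
    · cases h
      rcases List.mem_cons.mp hT with h' | h'
      · simp at h'
      · exact hnt true h'
    · rcases List.mem_cons.mp hT with h' | h'
      · simp at h'
      · exact ih hnd' e ⟨h', h⟩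

/-- augmenting along a residual path strictly increases the value. -/
lemma augment_lt {N : FlowNetwork V E} {A B : Finset E} (hA : A ⊆ N.Ein)
    (hB : B ⊆ N.Eout) {f : E → ℝ} (hadm : N.Adm A B f) {u w : V}
    {L : List (E × Bool)} (hp : IsPath N f u L w) (hnd : (pverts N u L).Nodup)
    {es e0 : E} (hes : es ∈ A) (hesh : N.head es = u) (hess : f es < N.cap es)
    (he0 : e0 ∈ B) (he0t : N.tail e0 = w) (he0s : f e0 < N.cap e0) :
    ∃ g : E → ℝ, N.Adm A B g ∧ ∑ e ∈ A, f e < ∑ e ∈ A, g e := by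
  obtain ⟨hfeas, hvan⟩ := hadm
  obtain ⟨δ₀, hδ₀, hall⟩ := exists_delta hp
  set δ : ℝ := min δ₀ (min (N.cap es - f es) (N.cap e0 - f e0)) with hδdef
  have hδ : 0 < δ := lt_min hδ₀ (lt_min (by linarith) (by linarith))
  have hδ1 : δ ≤ δ₀ := min_le_left _ _
  have hδ2 : δ ≤ N.cap es - f es := (min_le_right _ _).trans (min_le_left _ _)
  have hδ3 : δ ≤ N.cap e0 - f e0 := (min_le_right _ _).trans (min_le_right _ _)
  have hesin : es ∈ N.Ein := hA hes
  have he0out : e0 ∈ N.Eout := hB he0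
  have hne : es ≠ e0 := fun h =>
    Finset.disjoint_left.mp N.disj_in_out hesin (h ▸ he0out)
  have hesnotint : es ∉ N.Eint := Finset.disjoint_left.mp N.disj_in_int hesin
  have he0notint : e0 ∉ N.Eint := Finset.disjoint_left.mp N.disj_out_int he0out
  have hLint : ∀ (e : E) (b : Bool), (e, b) ∈ L → e ∈ N.Eint :=
    fun e b hb => (path_mem_facts hp hb).1
  have hpc0 : ∀ e : E, e ∉ N.Eint → pcoef L e = 0 :=
    fun e he' => pcoef_of_not_mem (fun b hb => he' (hLint e b hb))
  set D : E → ℝ := fun e =>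
    (if e = es then 1 else 0) + (if e = e0 then 1 else 0) + pcoef L e with hDdef
  set g : E → ℝ := fun e => f e + δ * D e with hgdef
  have hind : ∀ (T : Finset E) (a : E),
      ∑ e ∈ T, (if e = a then (1:ℝ) else 0) = if a ∈ T then 1 else 0 :=
    fun T a => Finset.sum_ite_eq' T a (fun _ => (1:ℝ))
  have hsumg : ∀ T : Finset E, ∑ e ∈ T, g e = ∑ e ∈ T, f e +
      δ * (∑ e ∈ T, (if e = es then (1:ℝ) else 0) +
           ∑ e ∈ T, (if e = e0 then (1:ℝ) else 0) + ∑ e ∈ T, pcoef L e) := by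
    intro T
    rw [hgdef]
    simp only []
    rw [Finset.sum_add_distrib, ← Finset.mul_sum]
    congr 1
    rw [hDdef]
    rw [Finset.sum_add_distrib, Finset.sum_add_distrib]
  -- capacity and nonnegativity
  have hDval : ∀ e : E, (e = es ∧ D e = 1) ∨ (e = e0 ∧ D e = 1) ∨
      ((e, true) ∈ L ∧ D e = 1) ∨ ((e, false) ∈ L ∧ D e = -1) ∨ D e = 0 := by
    intro e
    by_cases h1 : e = es
    · subst h1
      refine Or.inl ⟨rfl, ?_⟩
      rw [hDdef]; simp [hne, hpc0 _ hesnotint]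
    by_cases h2 : e = e0
    · subst h2
      refine Or.inr (Or.inl ⟨rfl, ?_⟩)
      rw [hDdef]; simp [h1, hpc0 _ he0notint]
    by_cases h3 : (e, true) ∈ L
    · have h4 : (e, false) ∉ L := fun h => path_not_both hp hnd e ⟨h3, h⟩
      refine Or.inr (Or.inr (Or.inl ⟨h3, ?_⟩))
      rw [hDdef]; simp [h1, h2, pcoef, h3, h4]
    by_cases h4 : (e, false) ∈ L
    · refine Or.inr (Or.inr (Or.inr (Or.inl ⟨h4, ?_⟩)))
      rw [hDdef]; simp [h1, h2, pcoef, h3, h4]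
    · refine Or.inr (Or.inr (Or.inr (Or.inr ?_)))
      rw [hDdef]; simp [h1, h2, pcoef, h3, h4]
  have hgfeas0 : ∀ e, 0 ≤ g e := by
    intro e
    have h0 := hfeas.1 e
    rcases hDval e with ⟨rfl, hD⟩ | ⟨rfl, hD⟩ | ⟨hm, hD⟩ | ⟨hm, hD⟩ | hD <;>
      rw [hgdef] <;> simp only [] <;> rw [hD]
    · linarith
    · linarith
    · linarith
    · have := (hall _ hm).2 rfl; simp only [] at this; linarith
    · linarith
  have hgcap : ∀ e, g e ≤ N.cap e := by
    intro e
    have h0 := hfeas.2.1 e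
    rcases hDval e with ⟨rfl, hD⟩ | ⟨rfl, hD⟩ | ⟨hm, hD⟩ | ⟨hm, hD⟩ | hD <;>
      rw [hgdef] <;> simp only [] <;> rw [hD]
    · linarith
    · linarith
    · have := (hall _ hm).1 rfl; simp only [] at this; linarith
    · linarith
    · linarith
  -- vanishing
  have hgvan : ∀ e ∈ (N.Ein \ A) ∪ (N.Eout \ B), g e = 0 := by
    intro e hemem
    have hf0 := hvan e hemem
    have hD0 : D e = 0 := by
      rcases Finset.mem_union.mp hemem with h | h
      · obtain ⟨h1, h2⟩ := Finset.mem_sdiff.mp h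
        have hnes : e ≠ es := fun hh => h2 (hh ▸ hes)
        have hne0 : e ≠ e0 := fun hh =>
          Finset.disjoint_left.mp N.disj_in_out h1 (hh ▸ he0out)
        rw [hDdef]
        simp [hnes, hne0, hpc0 _ (Finset.disjoint_left.mp N.disj_in_int h1)]
      · obtain ⟨h1, h2⟩ := Finset.mem_sdiff.mp h
        have hnes : e ≠ es := fun hh =>
          Finset.disjoint_left.mp N.disj_in_out hesin (hh ▸ h1)
        have hne0 : e ≠ e0 := fun hh => h2 (hh ▸ he0)
        rw [hDdef]
        simp [hnes, hne0, hpc0 _ (Finset.disjoint_left.mp N.disj_out_int h1)]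
    rw [hgdef]; simp only []; rw [hD0, hf0]; ring
  -- conservation
  have hgcons : ∀ v : V,
      ∑ e ∈ (N.Ein ∪ N.Eint).filter (fun e => N.head e = v), g e =
      ∑ e ∈ (N.Eout ∪ N.Eint).filter (fun e => N.tail e = v), g e := by
    intro v
    have hold := hfeas.2.2 v
    have hdiv := pdiv hp hnd v
    -- T1 computations
    have hT1es : ∑ e ∈ (N.Ein ∪ N.Eint).filter (fun e => N.head e = v),
        (if e = es then (1:ℝ) else 0) = if u = v then 1 else 0 := by
      rw [hind]
      by_cases h : N.head es = v
      · rw [if_pos, if_pos (hesh ▸ h)]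
        exact Finset.mem_filter.mpr ⟨Finset.mem_union_left _ hesin, h⟩
      · rw [if_neg, if_neg (fun hh => h (hesh.symm ▸ hh))]
        exact fun hmem => h (Finset.mem_filter.mp hmem).2
    have hT1e0 : ∑ e ∈ (N.Ein ∪ N.Eint).filter (fun e => N.head e = v),
        (if e = e0 then (1:ℝ) else 0) = 0 := by
      rw [hind, if_neg]
      intro hmem
      rcases Finset.mem_union.mp (Finset.mem_filter.mp hmem).1 with h | h
      · exact Finset.disjoint_left.mp N.disj_in_out h he0out
      · exact he0notint h
    have hT2es : ∑ e ∈ (N.Eout ∪ N.Eint).filter (fun e => N.tail e = v),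
        (if e = es then (1:ℝ) else 0) = 0 := by
      rw [hind, if_neg]
      intro hmem
      rcases Finset.mem_union.mp (Finset.mem_filter.mp hmem).1 with h | h
      · exact Finset.disjoint_left.mp N.disj_in_out hesin h
      · exact hesnotint h
    have hT2e0 : ∑ e ∈ (N.Eout ∪ N.Eint).filter (fun e => N.tail e = v),
        (if e = e0 then (1:ℝ) else 0) = if w = v then 1 else 0 := by
      rw [hind]
      by_cases h : N.tail e0 = v
      · rw [if_pos, if_pos (he0t ▸ h)]
        exact Finset.mem_filter.mpr ⟨Finset.mem_union_left _ he0out, h⟩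
      · rw [if_neg, if_neg (fun hh => h (he0t.symm ▸ hh))]
        exact fun hmem => h (Finset.mem_filter.mp hmem).2
    have hT1pc : ∑ e ∈ (N.Ein ∪ N.Eint).filter (fun e => N.head e = v), pcoef L e =
        ∑ e ∈ N.Eint.filter (fun e => N.head e = v), pcoef L e := by
      rw [Finset.filter_union,
        Finset.sum_union (Finset.disjoint_filter_filter N.disj_in_int)]
      have : ∑ e ∈ N.Ein.filter (fun e => N.head e = v), pcoef L e = 0 :=
        Finset.sum_eq_zero fun e he =>
          hpc0 e (Finset.disjoint_left.mp N.disj_in_int (Finset.mem_filter.mp he).1)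
      rw [this, zero_add]
    have hT2pc : ∑ e ∈ (N.Eout ∪ N.Eint).filter (fun e => N.tail e = v), pcoef L e =
        ∑ e ∈ N.Eint.filter (fun e => N.tail e = v), pcoef L e := by
      rw [Finset.filter_union,
        Finset.sum_union (Finset.disjoint_filter_filter N.disj_out_int)]
      have : ∑ e ∈ N.Eout.filter (fun e => N.tail e = v), pcoef L e = 0 :=
        Finset.sum_eq_zero fun e he =>
          hpc0 e (Finset.disjoint_left.mp N.disj_out_int (Finset.mem_filter.mp he).1)
      rw [this, zero_add]
    rw [hsumg, hsumg, hold, hT1es, hT1e0, hT2es, hT2e0, hT1pc, hT2pc]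
    have : (if u = v then (1:ℝ) else 0) + 0 +
        ∑ e ∈ N.Eint.filter (fun e => N.head e = v), pcoef L e =
        0 + (if w = v then 1 else 0) +
        ∑ e ∈ N.Eint.filter (fun e => N.tail e = v), pcoef L e := by linarith
    rw [this]
  -- value increase
  refine ⟨g, ⟨⟨hgfeas0, hgcap, hgcons⟩, hgvan⟩, ?_⟩
  have hAes : ∑ e ∈ A, (if e = es then (1:ℝ) else 0) = 1 := by
    rw [hind, if_pos hes]
  have hAe0 : ∑ e ∈ A, (if e = e0 then (1:ℝ) else 0) = 0 := by
    rw [hind, if_neg (fun h => Finset.disjoint_left.mp N.disj_in_out (hA h) he0out)]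
  have hApc : ∑ e ∈ A, pcoef L e = 0 :=
    Finset.sum_eq_zero fun e he => hpc0 e (Finset.disjoint_left.mp N.disj_in_int (hA he))
  rw [hsumg, hAes, hAe0, hApc]
  linarith

/-- Max-flow min-cut for the transport problem from `A` to `B`. -/
lemma mfmc (N : FlowNetwork V E) {A B : Finset E} (hA : A ⊆ N.Ein) (hB : B ⊆ N.Eout) :
    ∃ S : Finset V, N.maxFromTo A B = N.cutcap A B S := by
  classical
  obtain ⟨f, hadm, hopt, heq⟩ := N.exists_maxflow A B
  obtain ⟨hfeas, hvan⟩ := hadm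
  set r : V → V → Prop := fun a b =>
    (∃ e ∈ N.Eint, N.tail e = a ∧ N.head e = b ∧ f e < N.cap e) ∨
    (∃ e ∈ N.Eint, N.head e = a ∧ N.tail e = b ∧ 0 < f e) with hrdef
  set Src : V → Prop := fun x => ∃ e ∈ A, N.head e = x ∧ f e < N.cap e with hSrcdef
  set RS : V → Prop := fun x => ∃ u, Src u ∧ Relation.ReflTransGen r u x with hRSdef
  set S : Finset V := Finset.univ.filter RS with hSdef
  have hmem : ∀ v, v ∈ S ↔ RS v := by
    intro v; rw [hSdef]; simp
  have hsrc_mem : ∀ {x}, Src x → x ∈ S :=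
    fun hx => (hmem _).mpr ⟨_, hx, Relation.ReflTransGen.refl⟩
  have hstep : ∀ {x y}, x ∈ S → r x y → y ∈ S := by
    intro x y hx hr'
    obtain ⟨u, hu, hrtg⟩ := (hmem x).mp hx
    exact (hmem y).mpr ⟨u, hu, hrtg.tail hr'⟩
  have F1 : ∀ e ∈ A, N.head e ∉ S → f e = N.cap e := by
    intro e he hno
    by_contra hne
    exact hno (hsrc_mem ⟨e, he, rfl, lt_of_le_of_ne (hfeas.2.1 e) hne⟩)
  have F2 : ∀ e ∈ N.Eint, N.tail e ∈ S → N.head e ∉ S → f e = N.cap e := by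
    intro e he htS hno
    by_contra hne
    exact hno (hstep htS (Or.inl ⟨e, he, rfl, rfl, lt_of_le_of_ne (hfeas.2.1 e) hne⟩))
  have F3 : ∀ e ∈ N.Eint, ¬ N.tail e ∈ S → N.head e ∈ S → f e = 0 := by
    intro e he hno hhS
    by_contra hne
    exact hno (hstep hhS (Or.inr ⟨e, he, rfl, rfl, lt_of_le_of_ne (hfeas.1 e) (Ne.symm hne)⟩))
  have F4 : ∀ e ∈ B, N.tail e ∈ S → f e = N.cap e := by
    intro e0 he0 htS
    by_contra hne
    have he0s : f e0 < N.cap e0 := lt_of_le_of_ne (hfeas.2.1 e0) hne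
    obtain ⟨u, hSrcu, hrtg⟩ := (hmem _).mp htS
    obtain ⟨L0, hL0⟩ := rtg_path (N := N) (f := f) (fun _ _ h => h) hrtg
    obtain ⟨L, hL, hnd⟩ := exists_nodup_path hL0
    obtain ⟨es, hes, hesh, hess⟩ := hSrcu
    obtain ⟨g, hgadm, hglt⟩ :=
      augment_lt hA hB ⟨hfeas, hvan⟩ hL hnd hes hesh hess he0 rfl he0s
    exact absurd (hopt g hgadm) (not_le.mpr hglt)
  -- cut computation
  have hstar := N.star hfeas S
  have h1 : ∑ e ∈ N.Ein.filter (fun e => N.head e ∈ S), f e =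
      ∑ e ∈ A.filter (fun e => N.head e ∈ S), f e +
      ∑ e ∈ (N.Ein \ A).filter (fun e => N.head e ∈ S), f e :=
    sum_split_subset hA _ f
  have h2 : ∑ e ∈ (N.Ein \ A).filter (fun e => N.head e ∈ S), f e = 0 :=
    Finset.sum_eq_zero fun e he =>
      hvan e (Finset.mem_union_left _ (Finset.mem_filter.mp he).1)
  have h3 : ∑ e ∈ N.Eout.filter (fun e => N.tail e ∈ S), f e =
      ∑ e ∈ B.filter (fun e => N.tail e ∈ S), f e +
      ∑ e ∈ (N.Eout \ B).filter (fun e => N.tail e ∈ S), f e :=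
    sum_split_subset hB _ f
  have h4 : ∑ e ∈ (N.Eout \ B).filter (fun e => N.tail e ∈ S), f e = 0 :=
    Finset.sum_eq_zero fun e he =>
      hvan e (Finset.mem_union_right _ (Finset.mem_filter.mp he).1)
  have h5 : ∑ e ∈ B.filter (fun e => N.tail e ∈ S), f e =
      ∑ e ∈ B.filter (fun e => N.tail e ∈ S), N.cap e :=
    Finset.sum_congr rfl fun e he =>
      F4 e (Finset.mem_filter.mp he).1 (Finset.mem_filter.mp he).2
  have h6 : ∑ e ∈ N.Eint.filter (fun e => N.head e ∈ S), f e =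
      ∑ e ∈ N.Eint.filter (fun e => N.tail e ∈ S ∧ N.head e ∈ S), f e +
      ∑ e ∈ N.Eint.filter (fun e => ¬ N.tail e ∈ S ∧ N.head e ∈ S), f e := by
    rw [sum_split_pred N.Eint (fun e => N.head e ∈ S) (fun e => N.tail e ∈ S) f]
    rw [Finset.filter_congr (fun e _ => by tauto : ∀ e ∈ N.Eint,
        ((N.head e ∈ S ∧ N.tail e ∈ S) ↔ (N.tail e ∈ S ∧ N.head e ∈ S))),
      Finset.filter_congr (fun e _ => by tauto : ∀ e ∈ N.Eint,
        ((N.head e ∈ S ∧ ¬ N.tail e ∈ S) ↔ (¬ N.tail e ∈ S ∧ N.head e ∈ S)))]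
  have h7 : ∑ e ∈ N.Eint.filter (fun e => ¬ N.tail e ∈ S ∧ N.head e ∈ S), f e = 0 :=
    Finset.sum_eq_zero fun e he => by
      obtain ⟨he1, he2, he3⟩ := Finset.mem_filter.mp he
      exact F3 e he1 he2 he3
  have h8 : ∑ e ∈ N.Eint.filter (fun e => N.tail e ∈ S), f e =
      ∑ e ∈ N.Eint.filter (fun e => N.tail e ∈ S ∧ N.head e ∈ S), f e +
      ∑ e ∈ N.Eint.filter (fun e => N.tail e ∈ S ∧ ¬ N.head e ∈ S), f e :=
    sum_split_pred _ _ _ f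
  have h9 : ∑ e ∈ N.Eint.filter (fun e => N.tail e ∈ S ∧ ¬ N.head e ∈ S), f e =
      ∑ e ∈ N.Eint.filter (fun e => N.tail e ∈ S ∧ ¬ N.head e ∈ S), N.cap e :=
    Finset.sum_congr rfl fun e he => by
      obtain ⟨he1, he2, he3⟩ := Finset.mem_filter.mp he
      exact F2 e he1 he2 he3
  have h10 : ∑ e ∈ A, f e =
      ∑ e ∈ A.filter (fun e => N.head e ∈ S), f e +
      ∑ e ∈ A.filter (fun e => ¬ N.head e ∈ S), f e :=
    (Finset.sum_filter_add_sum_filter_not _ _ _).symm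
  have h11 : ∑ e ∈ A.filter (fun e => ¬ N.head e ∈ S), f e =
      ∑ e ∈ A.filter (fun e => ¬ N.head e ∈ S), N.cap e :=
    Finset.sum_congr rfl fun e he =>
      F1 e (Finset.mem_filter.mp he).1 (Finset.mem_filter.mp he).2
  refine ⟨S, ?_⟩
  rw [heq]
  unfold cutcap
  linarith

lemma maxFromTo_empty_left_le (N : FlowNetwork V E) : N.maxFromTo ∅ N.Eout ≤ 0 := by
  have h := N.maxFromTo_le_cutcap (Finset.empty_subset _) (Finset.Subset.refl _) (∅ : Finset V)
  have : N.cutcap ∅ N.Eout ∅ = 0 := by simp [cutcap]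
  linarith

lemma maxFromTo_empty_right_le (N : FlowNetwork V E) : N.maxFromTo N.Ein ∅ ≤ 0 := by
  have h := N.maxFromTo_le_cutcap (Finset.Subset.refl _) (Finset.empty_subset _)
    (Finset.univ : Finset V)
  have : N.cutcap N.Ein ∅ Finset.univ = 0 := by simp [cutcap]
  linarith

/-- `τ*(A,B) := [-maxFromTo N (Ein \ A) B, maxFromTo N A (Eout \ B)]`
is a well-defined typing, and it is a principal typing for `N`. -/
theorem stmt10 (N : FlowNetwork V E) :
    N.IsTyping (fun A B => -(N.maxFromTo (N.Ein \ A) B))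
               (fun A B => N.maxFromTo A (N.Eout \ B)) ∧
    N.PrincipalTyping (fun A B => -(N.maxFromTo (N.Ein \ A) B))
                      (fun A B => N.maxFromTo A (N.Eout \ B)) := by
  classical
  have htyping : N.IsTyping (fun A B => -(N.maxFromTo (N.Ein \ A) B))
      (fun A B => N.maxFromTo A (N.Eout \ B)) := by
    intro A _ B _
    have h1 := N.maxFromTo_nonneg (N.Ein \ A) B
    have h2 := N.maxFromTo_nonneg A (N.Eout \ B)
    simp only []
    linarith
  have hcomplete : ∀ f : E → ℝ, N.Feasible f →
      N.SatisfiesTyping (fun A B => -(N.maxFromTo (N.Ein \ A) B))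
        (fun A B => N.maxFromTo A (N.Eout \ B)) f := by
    intro f hf A hA B hB
    constructor
    · obtain ⟨S, hS⟩ := N.mfmc (Finset.sdiff_subset : N.Ein \ A ⊆ N.Ein) hB
      have := N.weakW2 hf hA hB S
      simp only []
      rw [hS]
      linarith
    · obtain ⟨S, hS⟩ := N.mfmc hA (Finset.sdiff_subset : N.Eout \ B ⊆ N.Eout)
      have := N.weakW hf hA hB S
      simp only []
      rw [hS]
      linarith
  refine ⟨htyping, htyping, hcomplete, ?_⟩
  -- soundness
  intro g hg0 hgt
  set c' : E → ℝ := fun e => if e ∈ N.Ein ∪ N.Eout then g e else N.cap e with hc'def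
  have hc'0 : ∀ e, 0 ≤ c' e := by
    intro e
    show 0 ≤ if e ∈ N.Ein ∪ N.Eout then g e else N.cap e
    by_cases h : e ∈ N.Ein ∪ N.Eout
    · rw [if_pos h]; exact hg0 e h
    · rw [if_neg h]; exact N.cap_nonneg e
  set N' : FlowNetwork V E := { N with cap := c', cap_nonneg := hc'0 } with hN'def
  have hc'in : ∀ e ∈ N.Ein, c' e = g e := fun e he => by
    show (if e ∈ N.Ein ∪ N.Eout then g e else N.cap e) = g e
    exact if_pos (Finset.mem_union_left _ he)
  have hc'out : ∀ e ∈ N.Eout, c' e = g e := fun e he => by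
    show (if e ∈ N.Ein ∪ N.Eout then g e else N.cap e) = g e
    exact if_pos (Finset.mem_union_right _ he)
  have hc'int : ∀ e ∈ N.Eint, c' e = N.cap e := fun e he => by
    show (if e ∈ N.Ein ∪ N.Eout then g e else N.cap e) = N.cap e
    refine if_neg (fun h => ?_)
    rcases Finset.mem_union.mp h with h' | h'
    · exact Finset.disjoint_left.mp N.disj_in_int h' he
    · exact Finset.disjoint_left.mp N.disj_out_int h' he
  -- g conserves total mass
  have hgEE : ∑ e ∈ N.Ein, g e = ∑ e ∈ N.Eout, g e := by
    obtain ⟨hlo, hhi⟩ := hgt N.Ein (Finset.Subset.refl _) N.Eout (Finset.Subset.refl _)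
    simp only [] at hlo hhi
    rw [Finset.sdiff_self] at hlo hhi
    have h1 := N.maxFromTo_empty_left_le
    have h2 := N.maxFromTo_empty_right_le
    linarith
  -- g is within capacities
  have hgcap_in : ∀ e ∈ N.Ein, g e ≤ N.cap e := by
    intro e he
    have hhi := (hgt {e} (Finset.singleton_subset_iff.mpr he) ∅ (Finset.empty_subset _)).2
    simp only [Finset.sum_singleton, Finset.sum_empty, sub_zero, Finset.sdiff_empty] at hhi
    have hle := N.maxFromTo_le_cutcap (Finset.singleton_subset_iff.mpr he)
      (Finset.Subset.refl _) (∅ : Finset V)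
    have : N.cutcap {e} N.Eout ∅ = N.cap e := by simp [cutcap]
    linarith
  have hgcap_out : ∀ e ∈ N.Eout, g e ≤ N.cap e := by
    intro e he
    have hhi := (hgt N.Ein (Finset.Subset.refl _) (N.Eout \ {e})
      (Finset.sdiff_subset)).2
    simp only [] at hhi
    rw [Finset.sdiff_sdiff_eq_self (Finset.singleton_subset_iff.mpr he)] at hhi
    have hsplit : ∑ e' ∈ N.Eout, g e' = ∑ e' ∈ N.Eout \ {e}, g e' + g e :=
      Finset.sum_eq_sum_sdiff_singleton_add he g
    have hle := N.maxFromTo_le_cutcap (Finset.Subset.refl _)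
      (Finset.singleton_subset_iff.mpr he) (Finset.univ : Finset V)
    have : N.cutcap N.Ein {e} Finset.univ = N.cap e := by simp [cutcap]
    linarith
  -- cut conditions for g
  have hcut : ∀ S : Finset V,
      ∑ e ∈ N.Ein.filter (fun e => N.head e ∈ S), g e -
      ∑ e ∈ N.Eout.filter (fun e => N.tail e ∈ S), g e ≤
      ∑ e ∈ N.Eint.filter (fun e => N.tail e ∈ S ∧ N.head e ∉ S), N.cap e := by
    intro S
    have hhi := (hgt (N.Ein.filter (fun e => N.head e ∈ S)) (Finset.filter_subset _ _)
      (N.Eout.filter (fun e => N.tail e ∈ S)) (Finset.filter_subset _ _)).2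
    have hle := N.maxFromTo_le_cutcap (Finset.filter_subset (fun e => N.head e ∈ S) N.Ein)
      (Finset.sdiff_subset : N.Eout \ N.Eout.filter (fun e => N.tail e ∈ S) ⊆ N.Eout) S
    have hT1 : ∑ e ∈ (N.Ein.filter (fun e => N.head e ∈ S)).filter
        (fun e => N.head e ∉ S), N.cap e = 0 := by
      have : (N.Ein.filter (fun e => N.head e ∈ S)).filter (fun e => N.head e ∉ S) = ∅ := by
        apply Finset.filter_eq_empty_iff.mpr
        intro e he
        exact not_not_intro (Finset.mem_filter.mp he).2
      rw [this, Finset.sum_empty]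
    have hT2 : ∑ e ∈ (N.Eout \ N.Eout.filter (fun e => N.tail e ∈ S)).filter
        (fun e => N.tail e ∈ S), N.cap e = 0 := by
      have : (N.Eout \ N.Eout.filter (fun e => N.tail e ∈ S)).filter
          (fun e => N.tail e ∈ S) = ∅ := by
        apply Finset.filter_eq_empty_iff.mpr
        intro e he h
        obtain ⟨h1, h2⟩ := Finset.mem_sdiff.mp he
        exact h2 (Finset.mem_filter.mpr ⟨h1, h⟩)
      rw [this, Finset.sum_empty]
    unfold cutcap at hle
    rw [hT1, hT2] at hle
    simp only [] at hhi
    linarith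
  -- max flow in N'
  obtain ⟨f, ⟨hffeas, _⟩, hfopt, hfval⟩ := N'.exists_maxflow N'.Ein N'.Eout
  obtain ⟨S, hScut⟩ := N'.mfmc (Finset.Subset.refl N'.Ein) (Finset.Subset.refl N'.Eout)
  -- N' components agree with N
  have hcc : N'.cutcap N'.Ein N'.Eout S =
      ∑ e ∈ N.Ein.filter (fun e => N.head e ∉ S), g e +
      ∑ e ∈ N.Eout.filter (fun e => N.tail e ∈ S), g e +
      ∑ e ∈ N.Eint.filter (fun e => N.tail e ∈ S ∧ N.head e ∉ S), N.cap e := by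
    unfold cutcap
    congr 1
    · congr 1
      · exact Finset.sum_congr rfl fun e he => hc'in e (Finset.mem_filter.mp he).1
      · exact Finset.sum_congr rfl fun e he => hc'out e (Finset.mem_filter.mp he).1
    · exact Finset.sum_congr rfl fun e he => hc'int e (Finset.mem_filter.mp he).1
  have hEinsplit : ∑ e ∈ N.Ein, g e =
      ∑ e ∈ N.Ein.filter (fun e => N.head e ∈ S), g e +
      ∑ e ∈ N.Ein.filter (fun e => N.head e ∉ S), g e :=
    (Finset.sum_filter_add_sum_filter_not _ _ _).symm
  have hcutS := hcut S
  have hN'Ein : N'.Ein = N.Ein := rfl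
  have hN'Eout : N'.Eout = N.Eout := rfl
  have hval : ∑ e ∈ N.Ein, f e =
      ∑ e ∈ N.Ein.filter (fun e => N.head e ∉ S), g e +
      ∑ e ∈ N.Eout.filter (fun e => N.tail e ∈ S), g e +
      ∑ e ∈ N.Eint.filter (fun e => N.tail e ∈ S ∧ N.head e ∉ S), N.cap e := by
    have h1 : N'.maxFromTo N'.Ein N'.Eout = ∑ e ∈ N'.Ein, f e := hfval
    rw [← hcc, ← hScut, h1, hN'Ein]
  have hfleg_in : ∀ e ∈ N.Ein, f e ≤ g e := by
    intro e he
    have h := hffeas.2.1 e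
    rwa [show N'.cap e = c' e from rfl, hc'in e he] at h
  have hsum_in_le : ∑ e ∈ N.Ein, f e ≤ ∑ e ∈ N.Ein, g e :=
    Finset.sum_le_sum hfleg_in
  have hsum_in_eq : ∑ e ∈ N.Ein, f e = ∑ e ∈ N.Ein, g e := by
    refine le_antisymm hsum_in_le ?_
    rw [hval]
    linarith
  have hpt_in : ∀ e ∈ N.Ein, f e = g e :=
    (Finset.sum_eq_sum_iff_of_le hfleg_in).mp hsum_in_eq
  -- total conservation of the flow
  have hstar' : ∑ e ∈ N.Ein, f e + ∑ e ∈ N.Eint, f e =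
      ∑ e ∈ N.Eout, f e + ∑ e ∈ N.Eint, f e := by
    have h := N'.star hffeas Finset.univ
    simpa using h
  have hfEE : ∑ e ∈ N.Ein, f e = ∑ e ∈ N.Eout, f e := by linarith
  have hfleg_out : ∀ e ∈ N.Eout, f e ≤ g e := by
    intro e he
    have h := hffeas.2.1 e
    rwa [show N'.cap e = c' e from rfl, hc'out e he] at h
  have hsum_out_eq : ∑ e ∈ N.Eout, f e = ∑ e ∈ N.Eout, g e := by
    rw [← hfEE, hsum_in_eq, hgEE]
  have hpt_out : ∀ e ∈ N.Eout, f e = g e :=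
    (Finset.sum_eq_sum_iff_of_le hfleg_out).mp hsum_out_eq
  -- assemble the feasible extension
  refine ⟨f, ⟨hffeas.1, ?_, fun v => hffeas.2.2 v⟩, ?_⟩
  · intro e
    by_cases hin : e ∈ N.Ein
    · rw [hpt_in e hin]; exact hgcap_in e hin
    by_cases hout : e ∈ N.Eout
    · rw [hpt_out e hout]; exact hgcap_out e hout
    · have hcov : e ∈ N.Ein ∪ N.Eout ∪ N.Eint := N.cover ▸ Finset.mem_univ e
      have hint : e ∈ N.Eint := by
        rcases Finset.mem_union.mp hcov with h | h
        · rcases Finset.mem_union.mp h with h' | h'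
          · exact absurd h' hin
          · exact absurd h' hout
        · exact h
      have h := hffeas.2.1 e
      rwa [show N'.cap e = c' e from rfl, hc'int e hint] at h
  · intro e he
    rcases Finset.mem_union.mp he with h | h
    · exact hpt_in e h
    · exact hpt_out e h

end FlowNetwork
end
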